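/- arXiv:2106.13759 — 6 statements merged into one kernel-verified Lean document; each statement's English description precedes it below -/
import Mathlib

section
/- Let a be a root of unity in ℂ. Then |a + a + a⁻²|² = 5 + 2(a³ + a⁻³), and this quantity is an integer if and only if a¹² = 1 or a¹⁸ = 1 (equivalently, the multiplicative order of a³ divides 4 or divides 6; equivalently, the multiplicative order of a lies in {1, 2, 3, 4, 6, 9, 12, 18}). -/
noncomputable section

lemma invlem (z : ℂ) (w : ℂ) (h : z * w = 1) : z⁻¹ = w :=
  inv_eq_of_mul_eq_one_right h

open Polynomial in
lemma intlem (z : ℂ) (N : ℕ) (hN : 0 < N) (hzN : z ^ N = 1) (q : ℚ)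
    (hq : z + z⁻¹ = (q : ℂ)) : ∃ k : ℤ, z + z⁻¹ = (k : ℂ) := by
  have hz0 : z ≠ 0 := by
    intro h; rw [h, zero_pow hN.ne'] at hzN; exact zero_ne_one hzN
  have hinv : z⁻¹ = z ^ (N - 1) := by
    field_simp
    rw [← pow_succ', Nat.sub_add_cancel hN]
    exact hzN.symm
  have hiz : IsIntegral ℤ z := by
    refine ⟨X ^ N - C 1, ?_, ?_⟩
    · simpa using monic_X_pow_sub_C (1 : ℤ) hN.ne'
    · simp [hzN]
  have hw : IsIntegral ℤ (z + z⁻¹) := by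
    rw [hinv]; exact hiz.add (hiz.pow _)
  rw [hq] at hw
  have hq2 : IsIntegral ℤ q := by
    rw [show ((q : ℂ)) = algebraMap ℚ ℂ q from rfl] at hw
    exact (isIntegral_algebraMap_iff (A := ℚ) (B := ℂ) (R := ℤ) (x := q)
      (algebraMap ℚ ℂ).injective).mp hw
  obtain ⟨k, hk⟩ := IsIntegrallyClosed.isIntegral_iff.mp hq2
  exact ⟨k, by rw [hq, ← hk]; simp⟩

lemma fwd (z : ℂ) (hz : z ≠ 0) (k : ℤ) (hk2 : -2 ≤ k) (hk2' : k ≤ 2)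
    (h : z + z⁻¹ = (k : ℂ)) : z ^ 4 = 1 ∨ z ^ 6 = 1 := by
  have h' : z ^ 2 + 1 = (k : ℂ) * z := by
    have := congrArg (· * z) h
    field_simp at this
    linear_combination this
  interval_cases k
  · left
    have hz1 : (z + 1) ^ 2 = 0 := by push_cast at h'; linear_combination h'
    have : z = -1 := by
      have := pow_eq_zero_iff (n := 2) (by norm_num) |>.mp hz1
      linear_combination this
    rw [this]; norm_num
  · right
    push_cast at h'
    linear_combination (z ^ 4 - z ^ 3 + z - 1) * h'
  · left
    push_cast at h'
    linear_combination (z ^ 2 - 1) * h'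
  · right
    push_cast at h'
    linear_combination (z ^ 4 + z ^ 3 - z - 1) * h'
  · left
    have hz1 : (z - 1) ^ 2 = 0 := by push_cast at h'; linear_combination h'
    have : z = 1 := by
      have := pow_eq_zero_iff (n := 2) (by norm_num) |>.mp hz1
      linear_combination this
    rw [this]; norm_num

lemma bwd (z : ℂ) (h : z ^ 4 = 1 ∨ z ^ 6 = 1) : ∃ k : ℤ, z + z⁻¹ = (k : ℂ) := by
  rcases h with h | h
  · have h2 : (z ^ 2 - 1) * (z ^ 2 + 1) = 0 := by linear_combination h
    rcases mul_eq_zero.mp h2 with h2 | h2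
    · have h3 : (z - 1) * (z + 1) = 0 := by linear_combination h2
      rcases mul_eq_zero.mp h3 with h3 | h3
      · exact ⟨2, by rw [show z = 1 by linear_combination h3]; norm_num⟩
      · exact ⟨-2, by rw [show z = -1 by linear_combination h3]; norm_num⟩
    · refine ⟨0, ?_⟩
      rw [invlem z (-z) (by linear_combination -h2)]
      push_cast; ring
  · have h2 : (z ^ 3 - 1) * (z ^ 3 + 1) = 0 := by linear_combination h
    rcases mul_eq_zero.mp h2 with h2 | h2
    · have h3 : (z - 1) * (z ^ 2 + z + 1) = 0 := by linear_combination h2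
      rcases mul_eq_zero.mp h3 with h3 | h3
      · exact ⟨2, by rw [show z = 1 by linear_combination h3]; norm_num⟩
      · refine ⟨-1, ?_⟩
        rw [invlem z (z ^ 2) (by linear_combination h2)]
        push_cast
        linear_combination h3
    · have h3 : (z + 1) * (z ^ 2 - z + 1) = 0 := by linear_combination h2
      rcases mul_eq_zero.mp h3 with h3 | h3
      · exact ⟨-2, by rw [show z = -1 by linear_combination h3]; norm_num⟩
      · refine ⟨1, ?_⟩
        rw [invlem z (-z ^ 2) (by linear_combination -h2)]
        push_cast
        linear_combination -h3

theorem statement2 (a : ℂ) (ha : ∃ n : ℕ, 0 < n ∧ a ^ n = 1) :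
    (((‖a + a + a⁻¹ ^ 2‖) ^ 2 : ℝ) : ℂ) = 5 + 2 * (a ^ 3 + a⁻¹ ^ 3) ∧
    ((∃ m : ℤ, (‖a + a + a⁻¹ ^ 2‖) ^ 2 = (m : ℝ)) ↔
      (a ^ 12 = 1 ∨ a ^ 18 = 1)) ∧
    ((a ^ 12 = 1 ∨ a ^ 18 = 1) ↔ (orderOf (a ^ 3) ∣ 4 ∨ orderOf (a ^ 3) ∣ 6)) ∧
    ((a ^ 12 = 1 ∨ a ^ 18 = 1) ↔
      orderOf a ∈ ({1, 2, 3, 4, 6, 9, 12, 18} : Set ℕ)) := by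
  obtain ⟨n, hn, han⟩ := ha
  have hz0 : a ≠ 0 := by
    intro h; rw [h, zero_pow hn.ne'] at han; exact zero_ne_one han
  have hnorm : ‖a‖ = 1 := Complex.norm_eq_one_of_pow_eq_one han hn.ne'
  have hc : (starRingEnd ℂ) a = a⁻¹ := (Complex.inv_eq_conj hnorm).symm
  have hzinv : a⁻¹ ^ 3 = (a ^ 3)⁻¹ := by rw [inv_pow]
  have hz3 : a ^ 3 ≠ 0 := pow_ne_zero _ hz0
  -- Part 1
  have h1 : (((‖a + a + a⁻¹ ^ 2‖) ^ 2 : ℝ) : ℂ)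
      = 5 + 2 * (a ^ 3 + a⁻¹ ^ 3) := by
    have e1 : (((‖a + a + a⁻¹ ^ 2‖) ^ 2 : ℝ) : ℂ)
        = (a + a + a⁻¹ ^ 2) * (starRingEnd ℂ) (a + a + a⁻¹ ^ 2) := by
      rw [Complex.mul_conj, Complex.normSq_eq_norm_sq]
      try norm_cast
    rw [e1]
    simp only [map_add, map_pow, map_inv₀, hc, inv_inv]
    field_simp
    ring
  refine ⟨h1, ?_, ?_, ?_⟩
  · -- Part 2
    constructor
    · rintro ⟨m, hm⟩
      have hzn : (a ^ 3) ^ n = 1 := by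
        rw [← pow_mul, mul_comm, pow_mul, han, one_pow]
      have hq : a ^ 3 + (a ^ 3)⁻¹ = ((((m : ℚ) - 5) / 2 : ℚ) : ℂ) := by
        rw [hm] at h1
        rw [← hzinv]
        push_cast
        push_cast at h1
        linear_combination -h1 / 2
      obtain ⟨k, hk⟩ := intlem (a ^ 3) n hn hzn _ hq
      have habs3 : ‖a ^ 3‖ = 1 := by
        rw [norm_pow, hnorm, one_pow]
      have hb : |(k : ℝ)| ≤ 2 := by
        have := congrArg (‖·‖) hk
        rw [Complex.norm_intCast] at this
        calc |(k : ℝ)| = ‖a ^ 3 + (a ^ 3)⁻¹‖ := this.symm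
          _ ≤ ‖a ^ 3‖ + ‖(a ^ 3)⁻¹‖ := norm_add_le _ _
          _ = 2 := by rw [norm_inv, habs3]; norm_num
      rw [abs_le] at hb
      have h46 := fwd (a ^ 3) hz3 k (by exact_mod_cast hb.1) (by exact_mod_cast hb.2) hk
      rcases h46 with h | h
      · left; rw [show (12 : ℕ) = 3 * 4 from rfl, pow_mul]; exact h
      · right; rw [show (18 : ℕ) = 3 * 6 from rfl, pow_mul]; exact h
    · intro h
      have h46 : (a ^ 3) ^ 4 = 1 ∨ (a ^ 3) ^ 6 = 1 := by
        rcases h with h | h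
        · left; rw [← pow_mul]; exact h
        · right; rw [← pow_mul]; exact h
      obtain ⟨k, hk⟩ := bwd (a ^ 3) h46
      refine ⟨5 + 2 * k, ?_⟩
      have : (((‖a + a + a⁻¹ ^ 2‖) ^ 2 : ℝ) : ℂ)
          = (((5 + 2 * k : ℤ) : ℝ) : ℂ) := by
        rw [h1, hzinv, hk]; push_cast; ring
      exact_mod_cast this
  · -- Part 3
    have e4 : a ^ 12 = (a ^ 3) ^ 4 := by ring
    have e6 : a ^ 18 = (a ^ 3) ^ 6 := by ring
    rw [e4, e6, ← orderOf_dvd_iff_pow_eq_one, ← orderOf_dvd_iff_pow_eq_one]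
  · -- Part 4
    rw [← orderOf_dvd_iff_pow_eq_one, ← orderOf_dvd_iff_pow_eq_one]
    constructor
    · intro h
      simp only [Set.mem_insert_iff, Set.mem_singleton_iff]
      rcases h with h | h
      · have hle : orderOf a ≤ 12 := Nat.le_of_dvd (by norm_num) h
        interval_cases (orderOf a) <;> revert h <;> decide
      · have hle : orderOf a ≤ 18 := Nat.le_of_dvd (by norm_num) h
        interval_cases (orderOf a) <;> revert h <;> decide
    · intro h
      simp only [Set.mem_insert_iff, Set.mem_singleton_iff] at h
      rcases h with h | h | h | h | h | h | h | h <;> rw [h] <;> [skip; skip; skip; skip; skip; skip; skip; skip] <;> first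
        | (left; decide)
        | (right; decide)
end
end

section
/- Let a be a root of unity in ℂ, and set b = −a and c = −a⁻². Then |a² + b² + c²|² = 5 + 2(a⁶ + a⁻⁶), and this quantity is an integer if and only if a²⁴ = 1 or a³⁶ = 1 (equivalently, the multiplicative order of a⁶ divides 4 or divides 6). -/
noncomputable section

theorem statement3 (a b c : ℂ) (ha : ∃ n : ℕ, 0 < n ∧ a ^ n = 1)
    (hb : b = -a) (hc : c = -(a⁻¹ ^ 2)) :
    (((‖a ^ 2 + b ^ 2 + c ^ 2‖) ^ 2 : ℝ) : ℂ) = 5 + 2 * (a ^ 6 + a⁻¹ ^ 6) ∧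
    ((∃ m : ℤ, (‖a ^ 2 + b ^ 2 + c ^ 2‖) ^ 2 = (m : ℝ)) ↔
      (a ^ 24 = 1 ∨ a ^ 36 = 1)) ∧
    ((a ^ 24 = 1 ∨ a ^ 36 = 1) ↔ (orderOf (a ^ 6) ∣ 4 ∨ orderOf (a ^ 6) ∣ 6)) := by
  obtain ⟨n, hn, han⟩ := ha
  have ha0 : a ≠ 0 := by
    intro h
    rw [h, zero_pow hn.ne'] at han
    exact one_ne_zero han.symm
  have habs : ‖a‖ = 1 := by
    have h1 : ‖a‖ ^ n = 1 := by rw [← norm_pow, han, norm_one]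
    exact (pow_eq_one_iff_of_nonneg (norm_nonneg _) hn.ne').mp h1
  have hnsq : Complex.normSq a = 1 := by
    rw [Complex.normSq_eq_norm_sq, habs, one_pow]
  have hconj : (starRingEnd ℂ) a = a⁻¹ := by
    rw [Complex.inv_def, hnsq]
    simp
  -- Part 1
  have key : (((‖a ^ 2 + b ^ 2 + c ^ 2‖) ^ 2 : ℝ) : ℂ)
      = 5 + 2 * (a ^ 6 + a⁻¹ ^ 6) := by
    have h1 : (((‖a ^ 2 + b ^ 2 + c ^ 2‖) ^ 2 : ℝ) : ℂ)
        = (a ^ 2 + b ^ 2 + c ^ 2) * (starRingEnd ℂ) (a ^ 2 + b ^ 2 + c ^ 2) := by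
      rw [Complex.sq_norm, Complex.mul_conj]
    rw [h1, hb, hc]
    simp only [map_add, map_pow, map_neg, map_inv₀, hconj, inv_inv]
    field_simp
    ring
  refine ⟨key, ?_, ?_⟩
  · -- Part 2
    rw [inv_pow] at key
    set z : ℂ := a ^ 6 with hz
    have hzne : z ≠ 0 := pow_ne_zero _ ha0
    have h24 : a ^ 24 = z ^ 4 := by rw [hz, ← pow_mul]
    have h36 : a ^ 36 = z ^ 6 := by rw [hz, ← pow_mul]
    have hzn : z ^ n = 1 := by
      rw [hz, ← pow_mul, mul_comm, pow_mul, han, one_pow]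
    constructor
    · rintro ⟨m, hm⟩
      have hmc : (m : ℂ) = 5 + 2 * (z + z⁻¹) := by
        rw [← key, hm]
        norm_num
      -- integrality
      have hintz : IsIntegral ℤ z := by
        refine ⟨Polynomial.X ^ n - 1, ?_, ?_⟩
        · simpa using Polynomial.monic_X_pow_sub_C (1 : ℤ) hn.ne'
        · simp [Polynomial.eval₂_sub, hzn]
      have hintzi : IsIntegral ℤ z⁻¹ := by
        refine ⟨Polynomial.X ^ n - 1, ?_, ?_⟩
        · simpa using Polynomial.monic_X_pow_sub_C (1 : ℤ) hn.ne'
        · simp [Polynomial.eval₂_sub, inv_pow, hzn]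
      have hint : IsIntegral ℤ (z + z⁻¹) := hintz.add hintzi
      have hq : IsIntegral ℤ (((m : ℚ) - 5) / 2) := by
        rw [← isIntegral_algebraMap_iff (algebraMap ℚ ℂ).injective]
        have heq : (algebraMap ℚ ℂ) (((m : ℚ) - 5) / 2) = z + z⁻¹ := by
          rw [show ((algebraMap ℚ ℂ) (((m : ℚ) - 5) / 2)) = (((m : ℚ) - 5) / 2 : ℚ) from rfl]
          push_cast
          rw [div_eq_iff (by norm_num : (2 : ℂ) ≠ 0)]
          linear_combination hmc
        rwa [heq]
      obtain ⟨j, hj⟩ := IsIntegrallyClosed.isIntegral_iff.mp hq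
      have hjq : ((m : ℚ) - 5) / 2 = (j : ℚ) := by rw [← hj]; rfl
      have h2 : (m : ℚ) = 5 + 2 * j := by
        rw [div_eq_iff (by norm_num : (2 : ℚ) ≠ 0)] at hjq
        linarith
      have h2' : m = 5 + 2 * j := by exact_mod_cast h2
      have h3 : (m : ℂ) = 5 + 2 * (j : ℂ) := by exact_mod_cast h2'
      have hzj : z + z⁻¹ = (j : ℂ) := by
        linear_combination (h3 - hmc) / 2
      -- bound on j
      have hbound : |(j : ℝ)| ≤ 2 := by
        have h4 : ‖z + z⁻¹‖ ≤ 2 := by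
          calc ‖z + z⁻¹‖ ≤ ‖z‖ + ‖z⁻¹‖ :=
                norm_add_le _ _
            _ = 2 := by
                rw [norm_inv, hz, norm_pow, habs]
                norm_num
        rw [hzj] at h4
        simpa using h4
      have hj1 : (-2 : ℤ) ≤ j := by
        have := (abs_le.mp hbound).1
        exact_mod_cast this
      have hj2 : j ≤ 2 := by
        have := (abs_le.mp hbound).2
        exact_mod_cast this
      have hpoly : z ^ 2 + 1 = (j : ℂ) * z := by
        have h5 := congrArg (· * z) hzj
        rw [add_mul, inv_mul_cancel₀ hzne] at h5
        linear_combination h5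
      interval_cases j
      · -- j = -2 : z = -1
        left
        push_cast at hpoly
        have hzz : (z + 1) ^ 2 = 0 := by linear_combination hpoly
        have hz1 : z = -1 := by
          have h6 := (pow_eq_zero_iff two_ne_zero).mp hzz
          linear_combination h6
        rw [h24, hz1]; norm_num
      · -- j = -1 : z^3 = 1
        right
        rw [h36]
        push_cast at hpoly
        linear_combination (z ^ 4 - z ^ 3 + z - 1) * hpoly
      · -- j = 0 : z^2 = -1
        left
        rw [h24]
        push_cast at hpoly
        linear_combination (z ^ 2 - 1) * hpoly
      · -- j = 1 : z^3 = -1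
        right
        rw [h36]
        push_cast at hpoly
        linear_combination (z ^ 4 + z ^ 3 - z - 1) * hpoly
      · -- j = 2 : z = 1
        left
        push_cast at hpoly
        have hzz : (z - 1) ^ 2 = 0 := by linear_combination hpoly
        have hz1 : z = 1 := by
          have h6 := (pow_eq_zero_iff two_ne_zero).mp hzz
          linear_combination h6
        rw [h24, hz1]; norm_num
    · -- converse
      have mk : ∀ m : ℤ, 5 + 2 * (z + z⁻¹) = (m : ℂ) →
          ∃ m' : ℤ, ‖a ^ 2 + b ^ 2 + c ^ 2‖ ^ 2 = (m' : ℝ) := by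
        intro m hm
        refine ⟨m, ?_⟩
        have h7 : ((‖a ^ 2 + b ^ 2 + c ^ 2‖ ^ 2 : ℝ) : ℂ) = ((m : ℝ) : ℂ) := by
          rw [key]
          push_cast
          linear_combination hm
        exact_mod_cast h7
      have hval : ∀ w : ℂ, z ^ 2 + 1 = w * z → z + z⁻¹ = w := by
        intro w hw
        field_simp
        linear_combination hw
      rintro (h | h)
      · rw [h24] at h
        have hf : (z ^ 2 - 1) * (z ^ 2 + 1) = 0 := by linear_combination h
        rcases mul_eq_zero.mp hf with h1 | h1
        · have hf2 : (z - 1) * (z + 1) = 0 := by linear_combination h1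
          rcases mul_eq_zero.mp hf2 with h2 | h2
          · exact mk 9 (by rw [hval 2 (by linear_combination (z - 1) * h2)]; norm_num)
          · exact mk 1 (by rw [hval (-2) (by linear_combination (z + 1) * h2)]; norm_num)
        · exact mk 5 (by rw [hval 0 (by linear_combination h1)]; norm_num)
      · rw [h36] at h
        have hf : (z ^ 3 - 1) * (z ^ 3 + 1) = 0 := by linear_combination h
        rcases mul_eq_zero.mp hf with h1 | h1
        · have hf2 : (z - 1) * (z ^ 2 + z + 1) = 0 := by linear_combination h1
          rcases mul_eq_zero.mp hf2 with h2 | h2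
          · exact mk 9 (by rw [hval 2 (by linear_combination (z - 1) * h2)]; norm_num)
          · exact mk 3 (by rw [hval (-1) (by linear_combination h2)]; norm_num)
        · have hf2 : (z + 1) * (z ^ 2 - z + 1) = 0 := by linear_combination h1
          rcases mul_eq_zero.mp hf2 with h2 | h2
          · exact mk 1 (by rw [hval (-2) (by linear_combination (z + 1) * h2)]; norm_num)
          · exact mk 7 (by rw [hval 1 (by linear_combination h2)]; norm_num)
  · -- Part 3
    have e4 : (a ^ 6) ^ 4 = a ^ 24 := by rw [← pow_mul]
    have e6 : (a ^ 6) ^ 6 = a ^ 36 := by rw [← pow_mul]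
    rw [orderOf_dvd_iff_pow_eq_one, orderOf_dvd_iff_pow_eq_one, e4, e6]
end
end

section
/- For every positive integer n, the following are equivalent: (i) for all complex numbers z₁, z₂, z₃ with z₁ⁿ = z₂ⁿ = z₃ⁿ = 1 and z₁z₂z₃ = 1, the quantity |z₁ + z₂ + z₃|² is an integer; (ii) n ∈ {1, 2, 3, 4, 6}. (Equivalently: the subgroup of SU(3) consisting of all diagonal matrices whose order divides n satisfies the restricted rationality condition if and only if n ∈ {1, 2, 3, 4, 6}.) -/
noncomputable section

open Complex in
lemma aux_norm_one {n : ℕ} (hn : 0 < n) {z : ℂ} (hz : z ^ n = 1) : ‖z‖ = 1 := by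
  have h : ‖z‖ ^ n = 1 := by rw [← norm_pow, hz, norm_one]
  have h0 : (0:ℝ) ≤ ‖z‖ := norm_nonneg z
  rcases lt_trichotomy ‖z‖ 1 with hl|hl|hl
  · have := pow_lt_one₀ h0 hl hn.ne'; linarith
  · exact hl
  · have := one_lt_pow₀ hl hn.ne'; linarith

open Complex in
lemma aux_key {n : ℕ} (hn : n = 1 ∨ n = 2 ∨ n = 3 ∨ n = 4 ∨ n = 6) (z : ℂ)
    (hz : z ^ n = 1) : ∃ a : ℤ, z + z⁻¹ = (a : ℂ) := by
  have hz0 : z ≠ 0 := by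
    intro h; subst h; rcases hn with h|h|h|h|h <;> simp [h] at hz
  have c1 : z = 1 → ∃ a : ℤ, z + z⁻¹ = (a : ℂ) := by
    intro h; exact ⟨2, by simp [h]; norm_num⟩
  have c2 : z ^ 2 = 1 → ∃ a : ℤ, z + z⁻¹ = (a : ℂ) := by
    intro h
    have : (z - 1) * (z + 1) = 0 := by linear_combination h
    rcases mul_eq_zero.mp this with h'|h'
    · exact c1 (by linear_combination h')
    · have hz1 : z = -1 := by linear_combination h'
      exact ⟨-2, by simp [hz1]; norm_num⟩
  have c3 : z ^ 3 = 1 → ∃ a : ℤ, z + z⁻¹ = (a : ℂ) := by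
    intro h
    have : (z - 1) * (z ^ 2 + z + 1) = 0 := by linear_combination h
    rcases mul_eq_zero.mp this with h'|h'
    · exact c1 (by linear_combination h')
    · have hinv : z⁻¹ = z ^ 2 := inv_eq_of_mul_eq_one_right (by linear_combination h)
      exact ⟨-1, by rw [hinv]; push_cast; linear_combination h'⟩
  rcases hn with h|h|h|h|h <;> subst h
  · exact c1 (by linear_combination hz)
  · exact c2 hz
  · exact c3 hz
  · have : (z ^ 2 - 1) * (z ^ 2 + 1) = 0 := by linear_combination hz
    rcases mul_eq_zero.mp this with h'|h'
    · exact c2 (by linear_combination h')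
    · have hinv : z⁻¹ = -z := inv_eq_of_mul_eq_one_right (by linear_combination -h')
      exact ⟨0, by rw [hinv]; push_cast; ring⟩
  · have : (z ^ 3 - 1) * (z ^ 3 + 1) = 0 := by linear_combination hz
    rcases mul_eq_zero.mp this with h'|h'
    · exact c3 (by linear_combination h')
    · have : (z + 1) * (z ^ 2 - z + 1) = 0 := by linear_combination h'
      rcases mul_eq_zero.mp this with h''|h''
      · have hz1 : z = -1 := by linear_combination h''
        exact ⟨-2, by simp [hz1]; norm_num⟩
      · have hinv : z⁻¹ = 1 - z := inv_eq_of_mul_eq_one_right (by linear_combination -h'')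
        exact ⟨1, by rw [hinv]; push_cast; ring⟩

theorem statement4 (n : ℕ) (hn : 0 < n) :
    (∀ z₁ z₂ z₃ : ℂ, z₁ ^ n = 1 → z₂ ^ n = 1 → z₃ ^ n = 1 → z₁ * z₂ * z₃ = 1 →
      ∃ m : ℤ, ‖z₁ + z₂ + z₃‖ ^ 2 = (m : ℝ)) ↔
    n ∈ ({1, 2, 3, 4, 6} : Set ℕ) := by
  constructor
  · intro H
    by_contra hns
    simp only [Set.mem_insert_iff, Set.mem_singleton_iff] at hns
    push_neg at hns
    obtain ⟨hn1, hn2, hn3, hn4, hn6⟩ := hns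
    have hn5 : 5 ≤ n := by omega
    have hπ := Real.pi_pos
    have hn0 : (0:ℝ) < n := by exact_mod_cast hn
    have hn5' : (5:ℝ) ≤ n := by exact_mod_cast hn5
    set θ : ℝ := 2 * Real.pi / n with hθdef
    have hθpos : 0 < θ := by positivity
    have hθlt : θ < Real.pi / 2 := by
      rw [hθdef, div_lt_iff₀ hn0]; nlinarith
    have hθleπ : θ ≤ Real.pi := by linarith
    set x : ℝ := 2 * Real.cos θ with hxdef
    have hcos_pos : 0 < Real.cos θ := Real.cos_pos_of_mem_Ioo ⟨by linarith, hθlt⟩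
    have hcos_lt : Real.cos θ < 1 := by
      refine lt_of_le_of_ne (Real.cos_le_one θ) (fun h => ?_)
      have h0 : Real.cos θ = Real.cos 0 := by rw [Real.cos_zero, h]
      have := Real.injOn_cos ⟨hθpos.le, hθleπ⟩ ⟨le_refl 0, Real.pi_pos.le⟩ h0
      linarith
    have hx0 : 0 < x := by simp [hxdef]; linarith
    have hx2 : x < 2 := by simp [hxdef]; linarith
    set ζ : ℂ := Complex.exp (θ * Complex.I) with hζdef
    have hζ0 : ζ ≠ 0 := Complex.exp_ne_zero _
    have hnθ : (n:ℝ) * θ = 2 * Real.pi := by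
      rw [hθdef]; field_simp
    have hζn : ζ ^ n = 1 := by
      rw [hζdef, ← Complex.exp_nat_mul,
        show ((n:ℂ) * ((θ:ℂ) * Complex.I)) = (((n:ℝ) * θ : ℝ) : ℂ) * Complex.I by push_cast; ring,
        hnθ]
      exact_mod_cast Complex.exp_two_pi_mul_I
    have hsum : ζ + ζ⁻¹ = ((x : ℝ) : ℂ) := by
      rw [hζdef, ← Complex.exp_neg,
        show (-((θ:ℂ) * Complex.I)) = ((-θ : ℝ) : ℂ) * Complex.I by push_cast; ring,
        Complex.exp_mul_I, Complex.exp_mul_I,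
        show ((x:ℝ):ℂ) = 2 * Complex.cos (θ:ℂ) by
          rw [hxdef]; push_cast [Complex.ofReal_cos]; ring]
      push_cast
      simp [Complex.cos_neg, Complex.sin_neg]
      ring
    -- first application
    obtain ⟨m₁, hm₁⟩ := H ζ ζ⁻¹ 1 hζn (by rw [inv_pow, hζn, inv_one]) (one_pow n)
      (by rw [mul_inv_cancel₀ hζ0, one_mul])
    have hA : (x + 1) ^ 2 = (m₁ : ℝ) := by
      have he : ζ + ζ⁻¹ + 1 = ((x + 1 : ℝ) : ℂ) := by rw [hsum]; push_cast; ring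
      rw [he, Complex.norm_real, Real.norm_eq_abs, sq_abs] at hm₁
      exact hm₁
    -- second application
    have hζ2n : (ζ ^ 2) ^ n = 1 := by rw [← pow_mul, mul_comm, pow_mul, hζn, one_pow]
    obtain ⟨m₂, hm₂⟩ := H (ζ ^ 2) (ζ ^ 2)⁻¹ 1 hζ2n
      (by rw [inv_pow, hζ2n, inv_one]) (one_pow n)
      (by rw [mul_inv_cancel₀ (pow_ne_zero 2 hζ0), one_mul])
    have hsum2 : ζ ^ 2 + (ζ ^ 2)⁻¹ = ((x ^ 2 - 2 : ℝ) : ℂ) := by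
      have h1 : ζ ^ 2 + (ζ ^ 2)⁻¹ = (ζ + ζ⁻¹) ^ 2 - 2 := by field_simp; ring
      rw [h1, hsum]; push_cast; ring
    have hB : (x ^ 2 - 1) ^ 2 = (m₂ : ℝ) := by
      have he : ζ ^ 2 + (ζ ^ 2)⁻¹ + 1 = ((x ^ 2 - 1 : ℝ) : ℂ) := by rw [hsum2]; push_cast; ring
      rw [he, Complex.norm_real, Real.norm_eq_abs, sq_abs] at hm₂
      exact hm₂
    -- rationality of x
    have hm₁1 : (1:ℝ) < (m₁:ℝ) := by nlinarith
    have hm₁0 : (m₁:ℝ) ≠ 0 := by linarith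
    have key : 4 * (m₁:ℝ) * x = (m₁:ℝ) ^ 2 - (m₂:ℝ) := by
      linear_combination ((m₁:ℝ) - 4*x + (x+1)^2) * hA - hB
    set q : ℚ := ((m₁:ℚ) ^ 2 - (m₂:ℚ) + 4 * (m₁:ℚ)) / (4 * (m₁:ℚ)) with hqdef
    have hq : (q : ℝ) = x + 1 := by
      rw [hqdef]
      push_cast
      rw [div_eq_iff (by intro h; apply hm₁0; linarith), ]
      linear_combination -key
    have hnotirr : ¬ Irrational (x + 1) := by
      rw [← hq]; exact Rat.not_irrational q
    have hyint : ∃ y : ℤ, x + 1 = (y : ℝ) := by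
      by_contra hc
      exact hnotirr (irrational_nrt_of_notint_nrt 2 m₁ (by exact_mod_cast hA) hc two_pos)
    obtain ⟨y, hy⟩ := hyint
    have hy1 : (1:ℝ) < (y:ℝ) := by rw [← hy]; linarith
    have hy3 : (y:ℝ) < 3 := by rw [← hy]; linarith
    have hy2 : y = 2 := by
      have h1 : (1:ℤ) < y := by exact_mod_cast hy1
      have h2 : y < (3:ℤ) := by exact_mod_cast hy3
      omega
    have hx1 : x = 1 := by rw [hy2] at hy; push_cast at hy; linarith
    have hcos : Real.cos θ = Real.cos (Real.pi / 3) := by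
      rw [Real.cos_pi_div_three]
      rw [hxdef] at hx1; linarith
    have hθval : θ = Real.pi / 3 :=
      Real.injOn_cos ⟨hθpos.le, hθleπ⟩ ⟨by linarith, by linarith⟩ hcos
    have : (n:ℝ) = 6 := by
      rw [hθval] at hnθ
      have : (n:ℝ) * Real.pi = 6 * Real.pi := by linarith
      exact mul_right_cancel₀ (ne_of_gt hπ) this
    exact hn6 (by exact_mod_cast this)
  · intro hmem z₁ z₂ z₃ h1 h2 h3 _
    have hmem' : n = 1 ∨ n = 2 ∨ n = 3 ∨ n = 4 ∨ n = 6 := by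
      simpa [Set.mem_insert_iff] using hmem
    have hz1 : z₁ ≠ 0 := fun h => by simp [h, zero_pow hn.ne'] at h1
    have hz2 : z₂ ≠ 0 := fun h => by simp [h, zero_pow hn.ne'] at h2
    have hz3 : z₃ ≠ 0 := fun h => by simp [h, zero_pow hn.ne'] at h3
    obtain ⟨a, ha⟩ := aux_key hmem' (z₁ * z₂⁻¹) (by rw [mul_pow, inv_pow, h1, h2, inv_one, mul_one])
    obtain ⟨b, hb⟩ := aux_key hmem' (z₁ * z₃⁻¹) (by rw [mul_pow, inv_pow, h1, h3, inv_one, mul_one])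
    obtain ⟨c, hc⟩ := aux_key hmem' (z₂ * z₃⁻¹) (by rw [mul_pow, inv_pow, h2, h3, inv_one, mul_one])
    refine ⟨3 + a + b + c, ?_⟩
    have hconj : (starRingEnd ℂ) (z₁ + z₂ + z₃) = z₁⁻¹ + z₂⁻¹ + z₃⁻¹ := by
      rw [map_add, map_add, ← Complex.inv_eq_conj (aux_norm_one hn h1),
        ← Complex.inv_eq_conj (aux_norm_one hn h2), ← Complex.inv_eq_conj (aux_norm_one hn h3)]
    have expand : (z₁ + z₂ + z₃) * (z₁⁻¹ + z₂⁻¹ + z₃⁻¹)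
        = 3 + ((z₁ * z₂⁻¹) + (z₁ * z₂⁻¹)⁻¹) + ((z₁ * z₃⁻¹) + (z₁ * z₃⁻¹)⁻¹)
          + ((z₂ * z₃⁻¹) + (z₂ * z₃⁻¹)⁻¹) := by
      field_simp
      ring
    have hval : ((Complex.normSq (z₁ + z₂ + z₃) : ℝ) : ℂ) = (((3 + a + b + c : ℤ) : ℝ) : ℂ) := by
      rw [← Complex.mul_conj, hconj, expand, ha, hb, hc]
      push_cast; ring
    rw [Complex.sq_norm]
    exact_mod_cast hval
end
end

section
/- Let H̃ be a finite subgroup of U(1) × SU(2) containing (−1, −1) and (e(1/3), 1) whose projection to SU(2) equals the binary tetrahedral group 2T, and suppose the subgroup H = π(H̃) of SU(3) satisfies the restricted rationality condition. Then H is conjugate in SU(3) to one of the following four subgroups: π(μ₆ × 2T), π(μ₁₂ × 2T), π(μ₁₈ × 2T), or π({(u, g) ∈ μ₁₈ × 2T : u⁶ = χ(g)}), where χ : 2T → μ₃ is a surjective homomorphism (its kernel is then Q = {±1, ±i, ±j, ±k}, and the two possible choices of χ yield subgroups that are conjugate in SU(3)). -/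
noncomputable section

open Matrix

abbrev UG3 := Matrix.unitaryGroup (Fin 3) ℂ

/-- The special unitary group SU(3), as a subgroup of the 3×3 unitary group:
matrices that are unitary and have determinant 1. -/
def SU3 : Subgroup ↥UG3 := MonoidHom.ker (Matrix.detMonoidHom.comp UG3.subtype)

abbrev G3 := ↥SU3

/-- The underlying 3×3 complex matrix of an element of SU(3). -/
def m3 (x : G3) : Matrix (Fin 3) (Fin 3) ℂ := ((x : ↥UG3) : Matrix (Fin 3) (Fin 3) ℂ)

/-- `e(x) = exp(2πi·x)`. -/
def eQ (x : ℚ) : ℂ := Complex.exp (2 * Real.pi * Complex.I * (x : ℂ))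

/-- `D(u,v,w) = diag(e(u), e(v), e(w))`. -/
def Dm (u v w : ℚ) : Matrix (Fin 3) (Fin 3) ℂ := Matrix.diagonal ![eQ u, eQ v, eQ w]

/-- The subgroup of SU(3) generated by the elements whose matrices lie in `s`. -/
def sgOf (s : Set (Matrix (Fin 3) (Fin 3) ℂ)) : Subgroup G3 :=
  Subgroup.closure {x : G3 | m3 x ∈ s}

/-- μ₃ : the subgroup of SU(3) of scalar matrices ζ·1 with ζ³ = 1. -/
def mu3 : Subgroup G3 :=
  sgOf {M | ∃ ζ : ℂ, ζ ^ 3 = 1 ∧ M = ζ • (1 : Matrix (Fin 3) (Fin 3) ℂ)}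

/-- The restricted rationality condition: |Trace A|² ∈ ℤ for all A ∈ H. -/
def RRC (H : Subgroup G3) : Prop :=
  ∀ x ∈ H, ∃ k : ℤ, (‖Matrix.trace (m3 x)‖) ^ 2 = (k : ℝ)

/-- Two subgroups of SU(3) are conjugate if one is carried onto the other by
conjugation by an element of SU(3). -/
def IsConjSub (H K : Subgroup G3) : Prop :=
  ∃ g : G3, Subgroup.map (MulAut.conj g).toMonoidHom H = K

-- matrices S, T₁, T₂, T₄, P₂₃
def Sm : Matrix (Fin 3) (Fin 3) ℂ := !![0, 0, 1; 1, 0, 0; 0, 1, 0]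

def Rm (ξ α : ℂ) : Matrix (Fin 3) (Fin 3) ℂ :=
  !![-(starRingEnd ℂ ξ), 0, 0; 0, 0, -(starRingEnd ℂ α); 0, -(ξ * α), 0]

def T1m : Matrix (Fin 3) (Fin 3) ℂ := Rm 1 1
def T2m : Matrix (Fin 3) (Fin 3) ℂ := Rm (-1) Complex.I
def T4m : Matrix (Fin 3) (Fin 3) ℂ := Rm Complex.I (eQ (3/8))

def P23 : Matrix (Fin 3) (Fin 3) ℂ := !![1, 0, 0; 0, 0, 1; 0, 1, 0]


abbrev UG2 := Matrix.unitaryGroup (Fin 2) ℂ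

/-- The special unitary group SU(2). -/
def SU2 : Subgroup ↥UG2 := MonoidHom.ker (Matrix.detMonoidHom.comp UG2.subtype)

abbrev G2 := ↥SU2

def m2 (x : G2) : Matrix (Fin 2) (Fin 2) ℂ := ((x : ↥UG2) : Matrix (Fin 2) (Fin 2) ℂ)

/-- The 2×2 matrix corresponding to the quaternion a + bi + cj + dk. -/
def qmat (a b c d : ℝ) : Matrix (Fin 2) (Fin 2) ℂ :=
  !![(a : ℂ) + b * Complex.I, (c : ℂ) + d * Complex.I;
     -(c : ℂ) + d * Complex.I, (a : ℂ) - b * Complex.I]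

/-- The binary tetrahedral group 2T = {±1, ±i, ±j, ±k, (±1 ± i ± j ± k)/2},
as a set of 2×2 matrices. -/
def twoT : Set (Matrix (Fin 2) (Fin 2) ℂ) :=
  {qmat 1 0 0 0, qmat (-1) 0 0 0, qmat 0 1 0 0, qmat 0 (-1) 0 0,
   qmat 0 0 1 0, qmat 0 0 (-1) 0, qmat 0 0 0 1, qmat 0 0 0 (-1)} ∪
  {M | ∃ a b c d : ℝ, (a = 1/2 ∨ a = -(1/2)) ∧ (b = 1/2 ∨ b = -(1/2)) ∧
    (c = 1/2 ∨ c = -(1/2)) ∧ (d = 1/2 ∨ d = -(1/2)) ∧ M = qmat a b c d}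

/-- The binary octahedral group 2O = 2T ∪ 2T·((1+i)/√2), as a set of 2×2 matrices. -/
def twoO : Set (Matrix (Fin 2) (Fin 2) ℂ) :=
  twoT ∪ (fun M => M * qmat (Real.sqrt 2)⁻¹ (Real.sqrt 2)⁻¹ 0 0) '' twoT

/-- The 3×3 matrix π(u, A) : block-diagonal with (1,1) entry u² and lower-right
2×2 block u⁻¹·A. -/
def su3block (u : ℂ) (A : Matrix (Fin 2) (Fin 2) ℂ) : Matrix (Fin 3) (Fin 3) ℂ :=
  !![u ^ 2, 0, 0;
     0, u⁻¹ * A 0 0, u⁻¹ * A 0 1;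
     0, u⁻¹ * A 1 0, u⁻¹ * A 1 1]

/-- The map π on U(1) × SU(2), at the matrix level. -/
def piMat (p : ↥(unitary ℂ) × G2) : Matrix (Fin 3) (Fin 3) ℂ :=
  su3block (p.1 : ℂ) (m2 p.2)

/-- π(μ_m × 2T), as a set of 3×3 matrices. -/
def BT (m : ℕ) : Set (Matrix (Fin 3) (Fin 3) ℂ) :=
  {M | ∃ u : ℂ, u ^ m = 1 ∧ ∃ A ∈ twoT, M = su3block u A}

/-- π({(u, g) ∈ μ₁₈ × 2T : u⁶ = χ(g)}), as a set of 3×3 matrices. -/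
def BT11 (χ : Matrix (Fin 2) (Fin 2) ℂ → ℂ) : Set (Matrix (Fin 3) (Fin 3) ℂ) :=
  {M | ∃ u : ℂ, u ^ 18 = 1 ∧ ∃ A ∈ twoT, u ^ 6 = χ A ∧ M = su3block u A}
lemma qmat_mul (a b c d e f g h : ℝ) : qmat a b c d * qmat e f g h =
    qmat (a*e - b*f - c*g - d*h) (a*f + b*e + c*h - d*g)
         (a*g - b*h + c*e + d*f) (a*h + b*g - c*f + d*e) := by
  ext i j
  fin_cases i <;> fin_cases j <;>
    simp [qmat, Matrix.mul_apply, Fin.sum_univ_two, Complex.ext_iff] <;>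
    constructor <;> ring

lemma qmat_congr {a b c d a' b' c' d' : ℝ} (h1 : a = a') (h2 : b = b') (h3 : c = c')
    (h4 : d = d') : qmat a b c d = qmat a' b' c' d' := by rw [h1, h2, h3, h4]

lemma qmat_one : qmat 1 0 0 0 = 1 := by
  ext i j; fin_cases i <;> fin_cases j <;> simp [qmat]

lemma qmat_neg_one : qmat (-1) 0 0 0 = -1 := by
  ext i j; fin_cases i <;> fin_cases j <;> simp [qmat]

lemma star_qmat (a b c d : ℝ) : star (qmat a b c d) = qmat a (-b) (-c) (-d) := by
  ext i j
  fin_cases i <;> fin_cases j <;>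
    simp [qmat, Matrix.star_apply, Matrix.conjTranspose_apply, Complex.ext_iff]

lemma qmat_trace (a b c d : ℝ) : (qmat a b c d).trace = 2 * a := by
  simp [qmat, Matrix.trace, Fin.sum_univ_two, Complex.ext_iff]; ring
lemma qmat_pow_three (a b c d : ℝ) : qmat a b c d ^ 3 =
    qmat (a^3 - 3*a*(b^2+c^2+d^2)) (b*(3*a^2 - (b^2+c^2+d^2)))
         (c*(3*a^2 - (b^2+c^2+d^2))) (d*(3*a^2 - (b^2+c^2+d^2))) := by
  rw [pow_succ, pow_two, qmat_mul, qmat_mul]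
  exact qmat_congr (by ring) (by ring) (by ring) (by ring)

/-- The quaternion group Q₈ as a set of matrices. -/
def Qset : Set (Matrix (Fin 2) (Fin 2) ℂ) :=
  {qmat 1 0 0 0, qmat (-1) 0 0 0, qmat 0 1 0 0, qmat 0 (-1) 0 0,
   qmat 0 0 1 0, qmat 0 0 (-1) 0, qmat 0 0 0 1, qmat 0 0 0 (-1)}

lemma Qset_subset_twoT : Qset ⊆ twoT := Set.subset_union_left

lemma cube_mem_Qset {A : Matrix (Fin 2) (Fin 2) ℂ} (hA : A ∈ twoT) : A ^ 3 ∈ Qset := by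
  rcases hA with h | ⟨a, b, c, d, ha, hb, hc, hd, rfl⟩
  · simp only [Set.mem_insert_iff, Set.mem_singleton_iff] at h
    rcases h with rfl|rfl|rfl|rfl|rfl|rfl|rfl|rfl <;>
      rw [qmat_pow_three] <;>
      simp only [Qset, Set.mem_insert_iff, Set.mem_singleton_iff] <;>
      norm_num
  · rw [qmat_pow_three]
    rcases ha with rfl|rfl <;> rcases hb with rfl|rfl <;> rcases hc with rfl|rfl <;>
      rcases hd with rfl|rfl <;>
      simp only [Qset, Set.mem_insert_iff, Set.mem_singleton_iff] <;> norm_num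
lemma m2_mul (x y : G2) : m2 (x * y) = m2 x * m2 y := rfl
lemma m2_one : m2 1 = 1 := rfl
lemma m2_inv (x : G2) : m2 x⁻¹ = star (m2 x) := rfl
lemma m2_inj : Function.Injective m2 := fun x y h => Subtype.ext (Subtype.ext h)

lemma m2_pow (x : G2) (n : ℕ) : m2 (x ^ n) = m2 x ^ n := by
  induction n with
  | zero => simp [m2_one]
  | succ n ih => rw [pow_succ, pow_succ, m2_mul, ih]
-- membership helpers
lemma mem_twoT_one : qmat 1 0 0 0 ∈ twoT := Or.inl (by simp)
lemma mem_twoT_i : qmat 0 1 0 0 ∈ twoT := Or.inl (by simp)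
lemma mem_twoT_j : qmat 0 0 1 0 ∈ twoT := Or.inl (by simp)
lemma mem_twoT_k : qmat 0 0 0 1 ∈ twoT := Or.inl (by simp)
lemma mem_twoT_omega : qmat (1/2) (1/2) (1/2) (1/2) ∈ twoT :=
  Or.inr ⟨1/2, 1/2, 1/2, 1/2, Or.inl rfl, Or.inl rfl, Or.inl rfl, Or.inl rfl, rfl⟩

-- commutator matrix identities
lemma comm_wi : qmat (1/2) (1/2) (1/2) (1/2) * qmat 0 1 0 0 *
    star (qmat (1/2) (1/2) (1/2) (1/2)) * star (qmat 0 1 0 0) = qmat 0 0 0 1 := by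
  rw [star_qmat, star_qmat, qmat_mul, qmat_mul, qmat_mul]
  exact qmat_congr (by norm_num) (by norm_num) (by norm_num) (by norm_num)

lemma comm_wj : qmat (1/2) (1/2) (1/2) (1/2) * qmat 0 0 1 0 *
    star (qmat (1/2) (1/2) (1/2) (1/2)) * star (qmat 0 0 1 0) = qmat 0 1 0 0 := by
  rw [star_qmat, star_qmat, qmat_mul, qmat_mul, qmat_mul]
  exact qmat_congr (by norm_num) (by norm_num) (by norm_num) (by norm_num)

lemma comm_wk : qmat (1/2) (1/2) (1/2) (1/2) * qmat 0 0 0 1 *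
    star (qmat (1/2) (1/2) (1/2) (1/2)) * star (qmat 0 0 0 1) = qmat 0 0 1 0 := by
  rw [star_qmat, star_qmat, qmat_mul, qmat_mul, qmat_mul]
  exact qmat_congr (by norm_num) (by norm_num) (by norm_num) (by norm_num)

lemma comm_ij : qmat 0 1 0 0 * qmat 0 0 1 0 *
    star (qmat 0 1 0 0) * star (qmat 0 0 1 0) = qmat (-1) 0 0 0 := by
  rw [star_qmat, star_qmat, qmat_mul, qmat_mul, qmat_mul]
  exact qmat_congr (by norm_num) (by norm_num) (by norm_num) (by norm_num)

section ht
variable {Ht : Subgroup (↥(unitary ℂ) × G2)}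
  (hproj : (fun p : ↥(unitary ℂ) × G2 => m2 p.2) '' (Ht : Set _) = twoT)

include hproj

lemma exists_lift {A : Matrix (Fin 2) (Fin 2) ℂ} (hA : A ∈ twoT) :
    ∃ p, p ∈ Ht ∧ m2 p.2 = A := by
  rw [← hproj] at hA; obtain ⟨p, hp, h⟩ := hA; exact ⟨p, hp, h⟩

lemma mem_twoT_of_mem {p : ↥(unitary ℂ) × G2} (hp : p ∈ Ht) : m2 p.2 ∈ twoT := by
  rw [← hproj]; exact ⟨p, hp, rfl⟩

lemma comm_lift {A B : Matrix (Fin 2) (Fin 2) ℂ} (hA : A ∈ twoT) (hB : B ∈ twoT) :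
    ∃ h : G2, ((1 : ↥(unitary ℂ)), h) ∈ Ht ∧ m2 h = A * B * star A * star B := by
  obtain ⟨p, hp, hpA⟩ := exists_lift hproj hA
  obtain ⟨q, hq, hqB⟩ := exists_lift hproj hB
  refine ⟨p.2 * q.2 * p.2⁻¹ * q.2⁻¹, ?_, ?_⟩
  · have hmem : p * q * p⁻¹ * q⁻¹ ∈ Ht :=
      mul_mem (mul_mem (mul_mem hp hq) (inv_mem hp)) (inv_mem hq)
    have : p * q * p⁻¹ * q⁻¹ = ((1 : ↥(unitary ℂ)), p.2 * q.2 * p.2⁻¹ * q.2⁻¹) := by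
      refine Prod.ext ?_ rfl
      show p.1 * q.1 * p.1⁻¹ * q.1⁻¹ = 1
      rw [mul_comm p.1 q.1]; group
    rwa [this] at hmem
  · rw [m2_mul, m2_mul, m2_mul, m2_inv, m2_inv, hpA, hqB]

lemma snd_one_lift_of_Qset {A : Matrix (Fin 2) (Fin 2) ℂ} (hA : A ∈ Qset) :
    ∃ h : G2, ((1 : ↥(unitary ℂ)), h) ∈ Ht ∧ m2 h = A := by
  obtain ⟨hk, hkm, hkA⟩ := comm_lift hproj mem_twoT_omega mem_twoT_i
  obtain ⟨hi, him, hiA⟩ := comm_lift hproj mem_twoT_omega mem_twoT_j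
  obtain ⟨hj, hjm, hjA⟩ := comm_lift hproj mem_twoT_omega mem_twoT_k
  obtain ⟨hn, hnm, hnA⟩ := comm_lift hproj mem_twoT_i mem_twoT_j
  rw [comm_wi] at hkA; rw [comm_wj] at hiA; rw [comm_wk] at hjA; rw [comm_ij] at hnA
  have prod2 : ∀ (x y : G2), ((1 : ↥(unitary ℂ)), x) ∈ Ht → ((1 : ↥(unitary ℂ)), y) ∈ Ht →
      ((1 : ↥(unitary ℂ)), x * y) ∈ Ht := by
    intro x y hx hy
    have := mul_mem hx hy
    simpa using this
  rcases hA with rfl|rfl|rfl|rfl|rfl|rfl|rfl|rfl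
  · exact ⟨1, one_mem Ht, by rw [m2_one, qmat_one]⟩
  · exact ⟨hn, hnm, hnA⟩
  · exact ⟨hi, him, hiA⟩
  · refine ⟨hn * hi, prod2 _ _ hnm him, ?_⟩
    rw [m2_mul, hnA, hiA, qmat_mul]
    exact qmat_congr (by norm_num) (by norm_num) (by norm_num) (by norm_num)
  · exact ⟨hj, hjm, hjA⟩
  · refine ⟨hn * hj, prod2 _ _ hnm hjm, ?_⟩
    rw [m2_mul, hnA, hjA, qmat_mul]
    exact qmat_congr (by norm_num) (by norm_num) (by norm_num) (by norm_num)
  · exact ⟨hk, hkm, hkA⟩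
  · refine ⟨hn * hk, prod2 _ _ hnm hkm, ?_⟩
    rw [m2_mul, hnA, hkA, qmat_mul]
    exact qmat_congr (by norm_num) (by norm_num) (by norm_num) (by norm_num)

lemma fst_mem_of_Qset {p : ↥(unitary ℂ) × G2} (hp : p ∈ Ht) (hQ : m2 p.2 ∈ Qset) :
    (p.1, (1 : G2)) ∈ Ht := by
  obtain ⟨h, hmem, hm2⟩ := snd_one_lift_of_Qset hproj hQ
  have h2 : h = p.2 := m2_inj (by rw [hm2])
  subst h2
  have hmm := mul_mem hp (inv_mem hmem)
  have : p * ((1 : ↥(unitary ℂ)), p.2)⁻¹ = (p.1, (1 : G2)) := by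
    refine Prod.ext ?_ ?_ <;> simp
  rwa [this] at hmm

lemma cube_fst_mem {p : ↥(unitary ℂ) × G2} (hp : p ∈ Ht) :
    (p.1 ^ 3, (1 : G2)) ∈ Ht := by
  have h3 : p ^ 3 ∈ Ht := pow_mem hp 3
  have : p ^ 3 = (p.1 ^ 3, p.2 ^ 3) := rfl
  rw [this] at h3
  have hQ : m2 (p.2 ^ 3) ∈ Qset := by
    rw [m2_pow]; exact cube_mem_Qset (mem_twoT_of_mem hproj hp)
  exact fst_mem_of_Qset hproj h3 hQ

end ht
lemma u_coe_ne_zero (u : ↥(unitary ℂ)) : (u : ℂ) ≠ 0 := by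
  intro h
  have := Unitary.coe_star_mul_self u
  rw [h] at this; simp at this

lemma u_coe_pow (u : ↥(unitary ℂ)) (n : ℕ) : ((u ^ n : ↥(unitary ℂ)) : ℂ) = (u : ℂ) ^ n := by
  induction n with
  | zero => simp
  | succ n ih => rw [pow_succ, pow_succ, ← ih]; rfl

lemma u_conj (u : ↥(unitary ℂ)) : (starRingEnd ℂ) (u : ℂ) = ((u : ℂ))⁻¹ := by
  have h : (starRingEnd ℂ) (u : ℂ) * (u : ℂ) = 1 := Unitary.coe_star_mul_self u
  field_simp [u_coe_ne_zero u] at h ⊢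
  linear_combination h

lemma K_gen (K : Subgroup ↥(unitary ℂ)) [Finite ↥K] :
    ∃ σ : ↥(unitary ℂ), σ ∈ K ∧ orderOf σ = Nat.card ↥K ∧
      ∀ u ∈ K, ∃ i : ℕ, σ ^ i = u := by
  have hcyc : IsCyclic ↥K := isCyclic_of_subgroup_isDomain
    ((Submonoid.subtype (unitary ℂ)).comp (Subgroup.subtype K))
    (Subtype.val_injective.comp Subtype.val_injective)
  obtain ⟨σ', hσ'⟩ := hcyc.exists_generator
  refine ⟨(σ' : ↥(unitary ℂ)), σ'.2, ?_, ?_⟩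
  · exact (orderOf_injective (Subgroup.subtype K) Subtype.val_injective σ').trans
      (orderOf_eq_card_of_forall_mem_zpowers hσ')
  · intro u hu
    have := hσ' ⟨u, hu⟩
    rw [← mem_powers_iff_mem_zpowers] at this
    obtain ⟨i, hi⟩ := this
    exact ⟨i, congrArg Subtype.val hi⟩

lemma K_pow_card (K : Subgroup ↥(unitary ℂ)) [Finite ↥K] {u : ↥(unitary ℂ)} (hu : u ∈ K) :
    u ^ (Nat.card ↥K) = 1 := by
  have : (⟨u, hu⟩ : ↥K) ^ (Nat.card ↥K) = 1 := pow_card_eq_one'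
  exact congrArg Subtype.val this

lemma K_card_ne_zero (K : Subgroup ↥(unitary ℂ)) [Finite ↥K] : Nat.card ↥K ≠ 0 :=
  Nat.card_ne_zero.mpr ⟨⟨1, one_mem K⟩, inferInstance⟩

lemma K_root_mem (K : Subgroup ↥(unitary ℂ)) [Finite ↥K] {z : ℂ}
    (hz : z ^ Nat.card ↥K = 1) : ∃ u : ↥(unitary ℂ), u ∈ K ∧ (u : ℂ) = z := by
  obtain ⟨σ, hσK, hσord, hσgen⟩ := K_gen K
  have hm : NeZero (Nat.card ↥K) := ⟨K_card_ne_zero K⟩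
  have hordc : orderOf ((σ : ℂ)) = Nat.card ↥K :=
    (orderOf_injective (Submonoid.subtype (unitary ℂ)) Subtype.val_injective σ).trans hσord
  have hprim : IsPrimitiveRoot ((σ : ℂ)) (Nat.card ↥K) := by
    rw [← hordc]; exact IsPrimitiveRoot.orderOf _
  obtain ⟨i, _, hi⟩ := hprim.eq_pow_of_pow_eq_one hz
  exact ⟨σ ^ i, pow_mem hσK i, by rw [u_coe_pow, hi]⟩
open Complex in
lemma root_abs_one {w : ℂ} {N : ℕ} (hN : N ≠ 0) (h : w ^ N = 1) : ‖w‖ = 1 := by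
  have h1 : ‖w‖ ^ N = 1 := by
    rw [← norm_pow, h]; exact norm_one
  by_contra hne
  rcases lt_or_gt_of_ne hne with hlt | hgt
  · have := pow_lt_one₀ (norm_nonneg w) hlt hN; linarith
  · have := one_lt_pow₀ hgt hN; linarith

lemma bound_n {w : ℂ} (habs : ‖w‖ = 1) {n : ℤ} (h : w + w⁻¹ = (n : ℂ)) :
    n = -2 ∨ n = -1 ∨ n = 0 ∨ n = 1 ∨ n = 2 := by
  have hinv : w⁻¹ = (starRingEnd ℂ) w := by
    rw [Complex.inv_def, Complex.normSq_eq_norm_sq, habs]; simp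
  rw [hinv] at h
  have hre : (n : ℝ) = w.re + w.re := by
    simpa using (congrArg Complex.re h).symm
  have hb : |w.re| ≤ 1 := by
    rw [← habs]; exact Complex.abs_re_le_norm w
  rw [abs_le] at hb
  have h1 : (-2 : ℝ) ≤ (n : ℝ) := by linarith
  have h2 : (n : ℝ) ≤ 2 := by linarith
  have h1' : (-2 : ℤ) ≤ n := by exact_mod_cast h1
  have h2' : n ≤ 2 := by exact_mod_cast h2
  omega

lemma quad_neg2 {w : ℂ} (hw : w ≠ 0) (h : w + w⁻¹ = ((-2 : ℤ) : ℂ)) : w = -1 := by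
  have hq : w ^ 2 + 2 * w + 1 = 0 := by field_simp at h; linear_combination h
  have : (w + 1) ^ 2 = 0 := by linear_combination hq
  have := pow_eq_zero_iff (n := 2) (by norm_num) |>.mp this
  linear_combination this

lemma quad_neg1 {w : ℂ} (hw : w ≠ 0) (h : w + w⁻¹ = ((-1 : ℤ) : ℂ)) : w ^ 3 = 1 := by
  have hq : w ^ 2 + w + 1 = 0 := by field_simp at h; linear_combination h
  linear_combination (w - 1) * hq

lemma quad_zero {w : ℂ} (hw : w ≠ 0) (h : w + w⁻¹ = ((0 : ℤ) : ℂ)) : w ^ 2 = -1 := by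
  field_simp at h; linear_combination h

lemma quad_one {w : ℂ} (hw : w ≠ 0) (h : w + w⁻¹ = ((1 : ℤ) : ℂ)) : w ^ 3 = -1 := by
  have hq : w ^ 2 - w + 1 = 0 := by field_simp at h; linear_combination h
  linear_combination (w + 1) * hq

lemma quad_two {w : ℂ} (hw : w ≠ 0) (h : w + w⁻¹ = ((2 : ℤ) : ℂ)) : w = 1 := by
  have hq : w ^ 2 - 2 * w + 1 = 0 := by field_simp at h; linear_combination h
  have h2 : (w - 1) ^ 2 = 0 := by linear_combination hq
  have := pow_eq_zero_iff (n := 2) (by norm_num) |>.mp h2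
  linear_combination this
lemma int_sum_of_two {w : ℂ} {a b : ℤ} (hw : w ≠ 0)
    (h1 : 2 * (w + w⁻¹) = (a : ℂ)) (h2 : 2 * (w ^ 2 + (w ^ 2)⁻¹) = (b : ℂ)) :
    ∃ n : ℤ, w + w⁻¹ = (n : ℂ) := by
  have hw2 : w ^ 2 ≠ 0 := pow_ne_zero 2 hw
  have hww : w * w⁻¹ = 1 := mul_inv_cancel₀ hw
  have hww2 : w ^ 2 * (w ^ 2)⁻¹ = 1 := mul_inv_cancel₀ hw2
  have h1' : 2 * (w * w + 1) = (a : ℂ) * w := by linear_combination w * h1 - 2 * hww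
  have h2' : 2 * (w ^ 2 * w ^ 2 + 1) = (b : ℂ) * w ^ 2 := by
    linear_combination w ^ 2 * h2 - 2 * hww2
  have key : (a : ℂ) ^ 2 * w ^ 2 = (2 * (b : ℂ) + 8) * w ^ 2 := by
    linear_combination (-((a:ℂ) * w + 2 * w * w + 2)) * h1' + 2 * h2'
  have keyC : ((a ^ 2 : ℤ) : ℂ) = ((2 * b + 8 : ℤ) : ℂ) := by
    push_cast
    exact mul_right_cancel₀ hw2 key
  have keyZ : a ^ 2 = 2 * b + 8 := by exact_mod_cast keyC
  have heven : Even a := by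
    have : Even (a ^ 2) := by rw [keyZ]; exact ⟨b + 4, by ring⟩
    exact (Int.even_pow.mp this).1
  obtain ⟨t, rfl⟩ := heven
  refine ⟨t, ?_⟩
  push_cast at h1
  linear_combination (1/2 : ℂ) * h1

lemma dvd_twelve {m : ℕ} (hm0 : m ≠ 0) (h6 : 6 ∣ m) (h : m ∣ 12) : m = 6 ∨ m = 12 := by
  have hle : m ≤ 12 := Nat.le_of_dvd (by norm_num) h
  have hge : 6 ≤ m := Nat.le_of_dvd (Nat.pos_of_ne_zero hm0) h6
  interval_cases m <;> omega

lemma dvd_eighteen {m : ℕ} (hm0 : m ≠ 0) (h6 : 6 ∣ m) (h : m ∣ 18) : m = 6 ∨ m = 18 := by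
  have hle : m ≤ 18 := Nat.le_of_dvd (by norm_num) h
  have hge : 6 ≤ m := Nat.le_of_dvd (Nat.pos_of_ne_zero hm0) h6
  interval_cases m <;> omega

lemma order_constraint {σ : ℂ} {m : ℕ} (hm0 : m ≠ 0) (hord : orderOf σ = m) (h6 : 6 ∣ m)
    (hn : ∃ n : ℤ, σ ^ 3 + (σ ^ 3)⁻¹ = (n : ℂ)) : m = 6 ∨ m = 12 ∨ m = 18 := by
  have hσm : σ ^ m = 1 := by rw [← hord]; exact pow_orderOf_eq_one σ
  have hσ0 : σ ≠ 0 := by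
    intro h; rw [h, zero_pow hm0] at hσm; exact zero_ne_one hσm
  have habs : ‖σ‖ = 1 := root_abs_one hm0 hσm
  have habs3 : ‖σ ^ 3‖ = 1 := by rw [norm_pow, habs, one_pow]
  have hw0 : σ ^ 3 ≠ 0 := pow_ne_zero 3 hσ0
  obtain ⟨n, hn⟩ := hn
  have hdvd : ∀ N : ℕ, σ ^ N = 1 → m ∣ N := fun N hN => hord ▸ orderOf_dvd_of_pow_eq_one hN
  rcases bound_n habs3 hn with rfl | rfl | rfl | rfl | rfl
  · have h3 : σ ^ 3 = -1 := quad_neg2 hw0 hn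
    have h61 : σ ^ 6 = 1 := by rw [show (6:ℕ) = 3*2 by rfl, pow_mul, h3]; norm_num
    exact Or.inl (Nat.dvd_antisymm (hdvd 6 h61) h6)
  · have h3 : (σ ^ 3) ^ 3 = 1 := quad_neg1 hw0 hn
    rw [← pow_mul] at h3
    have h9 := hdvd 9 h3
    have hle : m ≤ 9 := Nat.le_of_dvd (by norm_num) h9
    have hge : 6 ≤ m := Nat.le_of_dvd (Nat.pos_of_ne_zero hm0) h6
    interval_cases m <;> omega
  · have h3 : (σ ^ 3) ^ 2 = -1 := quad_zero hw0 hn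
    have h12 : σ ^ 12 = 1 := by
      have h4 : ((σ ^ 3) ^ 2) ^ 2 = 1 := by rw [h3]; norm_num
      rw [← pow_mul, ← pow_mul] at h4; exact h4
    rcases dvd_twelve hm0 h6 (hdvd 12 h12) with h | h
    · exact Or.inl h
    · exact Or.inr (Or.inl h)
  · have h3 : (σ ^ 3) ^ 3 = -1 := quad_one hw0 hn
    have h18 : σ ^ 18 = 1 := by
      have h4 : ((σ ^ 3) ^ 3) ^ 2 = 1 := by rw [h3]; norm_num
      rw [← pow_mul, ← pow_mul] at h4; exact h4
    rcases dvd_eighteen hm0 h6 (hdvd 18 h18) with h | h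
    · exact Or.inl h
    · exact Or.inr (Or.inr h)
  · have h3 : σ ^ 3 = 1 := quad_two hw0 hn
    have h3' := hdvd 3 h3
    have hle : m ≤ 3 := Nat.le_of_dvd (by norm_num) h3'
    omega
lemma su3block_trace (u : ℂ) (A : Matrix (Fin 2) (Fin 2) ℂ) :
    (su3block u A).trace = u ^ 2 + u⁻¹ * (A 0 0 + A 1 1) := by
  simp [su3block, Matrix.trace, Fin.sum_univ_three]; ring

lemma one_diag_sum : (1 : Matrix (Fin 2) (Fin 2) ℂ) 0 0 + (1 : Matrix (Fin 2) (Fin 2) ℂ) 1 1 = 2 := by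
  simp [Matrix.one_apply]; norm_num

lemma twoT_diag_sum {A : Matrix (Fin 2) (Fin 2) ℂ} (hA : A ∈ twoT) (hQ : A ∉ Qset) :
    A 0 0 + A 1 1 = 1 ∨ A 0 0 + A 1 1 = -1 := by
  rcases hA with h | ⟨a, b, c, d, ha, hb, hc, hd, rfl⟩
  · exact absurd h hQ
  · have hsum : (qmat a b c d) 0 0 + (qmat a b c d) 1 1 = 2 * (a : ℂ) := by
      simp [qmat]; ring
    rcases ha with rfl | rfl
    · left; rw [hsum]; norm_num
    · right; rw [hsum]; norm_num

lemma rrc_one {u : ℂ} (hu : (starRingEnd ℂ) u = u⁻¹) (hu0 : u ≠ 0) {k : ℤ}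
    (h : (u ^ 2 + u⁻¹ * 2) * (starRingEnd ℂ) (u ^ 2 + u⁻¹ * 2) = (k : ℂ)) :
    2 * (u ^ 3 + (u ^ 3)⁻¹) = (k : ℂ) - 5 := by
  have hww : u * u⁻¹ = 1 := mul_inv_cancel₀ hu0
  have hc : (starRingEnd ℂ) (u ^ 2 + u⁻¹ * 2) = u⁻¹ ^ 2 + u * 2 := by
    simp [map_add, _root_.map_mul, map_pow, map_inv₀, hu, inv_inv, Complex.conj_ofNat]
  rw [hc] at h
  rw [← inv_pow]
  linear_combination h - (u * u⁻¹ + 5) * hww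

lemma rrc_pm {u e : ℂ} (he : e = 1 ∨ e = -1) (hu : (starRingEnd ℂ) u = u⁻¹) (hu0 : u ≠ 0)
    {k : ℤ} (h : (u ^ 2 + u⁻¹ * e) * (starRingEnd ℂ) (u ^ 2 + u⁻¹ * e) = (k : ℂ)) :
    u ^ 3 + (u ^ 3)⁻¹ = e * ((k : ℂ) - 2) := by
  have hww : u * u⁻¹ = 1 := mul_inv_cancel₀ hu0
  have hce : (starRingEnd ℂ) e = e := by rcases he with rfl | rfl <;> simp
  have hc : (starRingEnd ℂ) (u ^ 2 + u⁻¹ * e) = u⁻¹ ^ 2 + u * e := by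
    simp [map_add, _root_.map_mul, map_pow, map_inv₀, hu, inv_inv, hce]
  rw [hc] at h
  rw [← inv_pow]
  rcases he with rfl | rfl
  · linear_combination h - (u * u⁻¹ + 2) * hww
  · linear_combination -h + (u * u⁻¹ + 2) * hww

lemma trace_int {Ht : Subgroup (↥(unitary ℂ) × G2)} {H : Subgroup G3}
    (hH : m3 '' (H : Set G3) = piMat '' (Ht : Set _)) (hrrc : RRC H)
    {p : ↥(unitary ℂ) × G2} (hp : p ∈ Ht) :
    ∃ k : ℤ, (Matrix.trace (piMat p)) * (starRingEnd ℂ) (Matrix.trace (piMat p)) = (k : ℂ) := by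
  have hmem : piMat p ∈ piMat '' (Ht : Set _) := ⟨p, hp, rfl⟩
  rw [← hH] at hmem
  obtain ⟨x, hx, hm3⟩ := hmem
  obtain ⟨k, hk⟩ := hrrc x hx
  refine ⟨k, ?_⟩
  rw [← hm3, Complex.mul_conj]
  have hn : Complex.normSq (Matrix.trace (m3 x)) = (k : ℝ) := by
    rw [← Complex.sq_norm]; exact hk
  rw [hn]
  norm_cast
lemma m3_inj : Function.Injective m3 := fun x y h => Subtype.ext (Subtype.ext h)

lemma sgOf_eq_self {H : Subgroup G3} {S : Set (Matrix (Fin 3) (Fin 3) ℂ)}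
    (h : m3 '' (H : Set G3) = S) : sgOf S = H := by
  unfold sgOf
  have hset : {x : G3 | m3 x ∈ S} = (H : Set G3) := by
    ext x
    constructor
    · intro hx
      rw [← h] at hx
      obtain ⟨y, hy, hxy⟩ := hx
      rwa [← m3_inj hxy]
    · intro hx
      rw [← h]; exact ⟨x, hx, rfl⟩
  rw [hset, Subgroup.closure_eq]

lemma isConjSub_refl (H : Subgroup G3) : IsConjSub H H := by
  refine ⟨1, ?_⟩
  ext x
  simp [Subgroup.mem_map]

lemma K_mem_of_coe (K : Subgroup ↥(unitary ℂ)) [Finite ↥K] {v : ↥(unitary ℂ)}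
    (hv : (v : ℂ) ^ Nat.card ↥K = 1) : v ∈ K := by
  obtain ⟨u, hu, he⟩ := K_root_mem K hv
  have : u = v := Subtype.ext he
  rwa [← this]

lemma eQ_third_pow : eQ (1/3) ^ 3 = 1 := by
  rw [eQ, ← Complex.exp_nat_mul]
  rw [show ((3:ℕ):ℂ) * (2 * Real.pi * Complex.I * ((1/3 : ℚ) : ℂ)) = 2 * Real.pi * Complex.I by
    push_cast; ring]
  exact Complex.exp_two_pi_mul_I

lemma eQ_third_ne_one : eQ (1/3) ≠ 1 := by
  rw [eQ]
  intro h
  rw [Complex.exp_eq_one_iff] at h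
  obtain ⟨n, hn⟩ := h
  have hpi : (2 * (Real.pi : ℂ) * Complex.I) ≠ 0 :=
    mul_ne_zero (mul_ne_zero two_ne_zero (Complex.ofReal_ne_zero.mpr Real.pi_ne_zero))
      Complex.I_ne_zero
  have h3 : ((1/3 : ℚ) : ℂ) = (n : ℂ) := by
    rw [mul_comm (n : ℂ) _] at hn
    exact mul_left_cancel₀ hpi hn
  have : (1 : ℂ) = 3 * n := by push_cast at h3 ⊢; linear_combination 3 * h3
  have : (1 : ℤ) = 3 * n := by exact_mod_cast this
  omega
lemma pow6_eq {x y : ℂ} (hy : y ≠ 0) (h : (x * y⁻¹) ^ 6 = 1) : x ^ 6 = y ^ 6 := by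
  rw [← div_eq_mul_inv, div_pow, div_eq_one_iff_eq (pow_ne_zero 6 hy)] at h
  exact h

lemma sq_cases {x : ℂ} (h : x ^ 2 = 1) : x = 1 ∨ x = -1 := by
  have hfac : (x - 1) * (x + 1) = 0 := by linear_combination h
  rcases mul_eq_zero.mp hfac with h' | h'
  · left; linear_combination h'
  · right; linear_combination h'

lemma kill12 {ζ w : ℂ} (hord : orderOf ζ = 12) (hw12 : w ^ 12 = 1) (hw4 : w ^ 4 ≠ 1)
    (h1 : ∃ n : ℤ, w + w⁻¹ = (n : ℂ))
    (h2 : ∃ n : ℤ, ζ ^ 3 * w + (ζ ^ 3 * w)⁻¹ = (n : ℂ)) : False := by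
  have hw0 : w ≠ 0 := by
    intro h; rw [h, zero_pow (by norm_num : (12:ℕ) ≠ 0)] at hw12; exact zero_ne_one hw12
  have habsw : ‖w‖ = 1 := root_abs_one (by norm_num) hw12
  have hζ12 : ζ ^ 12 = 1 := by rw [← hord]; exact pow_orderOf_eq_one ζ
  have hζ0 : ζ ≠ 0 := by
    intro h; rw [h, zero_pow (by norm_num : (12:ℕ) ≠ 0)] at hζ12; exact zero_ne_one hζ12
  have habsζ : ‖ζ‖ = 1 := root_abs_one (by norm_num) hζ12
  have hζ6 : ζ ^ 6 = -1 := by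
    have hsq : (ζ ^ 6) ^ 2 = 1 := by rw [← pow_mul]; exact hζ12
    rcases sq_cases hsq with h | h
    · exfalso
      have := orderOf_dvd_of_pow_eq_one h
      rw [hord] at this
      omega
    · exact h
  -- step 1 : w ^ 6 = 1
  obtain ⟨n₁, hn₁⟩ := h1
  have hw6 : w ^ 6 = 1 := by
    rcases bound_n habsw hn₁ with rfl | rfl | rfl | rfl | rfl
    · rw [quad_neg2 hw0 hn₁]; norm_num
    · have h3 : w ^ 3 = 1 := quad_neg1 hw0 hn₁
      rw [show (6:ℕ) = 3*2 by rfl, pow_mul, h3]; norm_num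
    · exfalso; apply hw4
      have h3 : w ^ 2 = -1 := quad_zero hw0 hn₁
      rw [show (4:ℕ) = 2*2 by rfl, pow_mul, h3]; norm_num
    · have h3 : w ^ 3 = -1 := quad_one hw0 hn₁
      rw [show (6:ℕ) = 3*2 by rfl, pow_mul, h3]; norm_num
    · exfalso; apply hw4; rw [quad_two hw0 hn₁]; norm_num
  -- step 2 : y := ζ³w
  obtain ⟨n₂, hn₂⟩ := h2
  have hy0 : ζ ^ 3 * w ≠ 0 := mul_ne_zero (pow_ne_zero 3 hζ0) hw0
  have habsy : ‖ζ ^ 3 * w‖ = 1 := by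
    rw [norm_mul, norm_pow, habsζ, habsw]; norm_num
  have hy6 : (ζ ^ 3 * w) ^ 6 = -1 := by
    rw [mul_pow, ← pow_mul, hw6, mul_one, show 3*6 = 12 + 6 by rfl, pow_add, hζ12, hζ6]
    norm_num
  rcases bound_n habsy hn₂ with rfl | rfl | rfl | rfl | rfl
  · have h3 := quad_neg2 hy0 hn₂
    rw [h3] at hy6; norm_num at hy6
  · have h3 := quad_neg1 hy0 hn₂
    have : ((ζ^3*w)^3)^2 = 1 := by rw [h3]; norm_num
    rw [← pow_mul] at this
    rw [this] at hy6; norm_num at hy6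
  · have h3 := quad_zero hy0 hn₂
    apply hw4
    have h4 : ((ζ^3*w)^2)^2 = 1 := by rw [h3]; norm_num
    rw [← pow_mul] at h4
    rw [mul_pow, ← pow_mul] at h4
    rw [show 3*(2*2) = 12 by rfl, hζ12, one_mul] at h4
    rw [show (2*2 : ℕ) = 4 by rfl] at h4
    exact h4
  · have h3 := quad_one hy0 hn₂
    have : ((ζ^3*w)^3)^2 = 1 := by rw [h3]; norm_num
    rw [← pow_mul] at this
    rw [this] at hy6; norm_num at hy6
  · have h3 := quad_two hy0 hn₂
    rw [h3] at hy6; norm_num at hy6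
lemma kill18 {ζ w : ℂ} (hord : orderOf ζ = 18) (hw18 : w ^ 18 = 1) (hw6 : w ^ 6 ≠ 1)
    (h1 : ∃ n : ℤ, w + w⁻¹ = (n : ℂ))
    (h2 : ∃ n : ℤ, ζ ^ 3 * w + (ζ ^ 3 * w)⁻¹ = (n : ℂ)) : False := by
  have hw0 : w ≠ 0 := by
    intro h; rw [h, zero_pow (by norm_num : (18:ℕ) ≠ 0)] at hw18; exact zero_ne_one hw18
  have habsw : ‖w‖ = 1 := root_abs_one (by norm_num) hw18
  have hζ18 : ζ ^ 18 = 1 := by rw [← hord]; exact pow_orderOf_eq_one ζ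
  have hζ0 : ζ ≠ 0 := by
    intro h; rw [h, zero_pow (by norm_num : (18:ℕ) ≠ 0)] at hζ18; exact zero_ne_one hζ18
  have habsζ : ‖ζ‖ = 1 := root_abs_one (by norm_num) hζ18
  have hζ6ne : ζ ^ 6 ≠ 1 := by
    intro h
    have := orderOf_dvd_of_pow_eq_one h
    rw [hord] at this
    omega
  have hζ12ne : ζ ^ 12 ≠ 1 := by
    intro h
    have := orderOf_dvd_of_pow_eq_one h
    rw [hord] at this
    omega
  -- step 1 : w² = -1
  obtain ⟨n₁, hn₁⟩ := h1
  have hw2 : w ^ 2 = -1 := by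
    rcases bound_n habsw hn₁ with rfl | rfl | rfl | rfl | rfl
    · exfalso; apply hw6; rw [quad_neg2 hw0 hn₁]; norm_num
    · exfalso; apply hw6
      have h3 : w ^ 3 = 1 := quad_neg1 hw0 hn₁
      rw [show (6:ℕ) = 3*2 by rfl, pow_mul, h3]; norm_num
    · exact quad_zero hw0 hn₁
    · exfalso; apply hw6
      have h3 : w ^ 3 = -1 := quad_one hw0 hn₁
      rw [show (6:ℕ) = 3*2 by rfl, pow_mul, h3]; norm_num
    · exfalso; apply hw6; rw [quad_two hw0 hn₁]; norm_num
  -- step 2 : y := ζ³w, y² = -ζ⁶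
  obtain ⟨n₂, hn₂⟩ := h2
  have hy0 : ζ ^ 3 * w ≠ 0 := mul_ne_zero (pow_ne_zero 3 hζ0) hw0
  have habsy : ‖ζ ^ 3 * w‖ = 1 := by
    rw [norm_mul, norm_pow, habsζ, habsw]; norm_num
  have hy2 : (ζ ^ 3 * w) ^ 2 = -(ζ ^ 6) := by
    rw [mul_pow, hw2]; ring
  rcases bound_n habsy hn₂ with rfl | rfl | rfl | rfl | rfl
  · have h3 := quad_neg2 hy0 hn₂
    apply hζ12ne
    have hζ6 : ζ ^ 6 = -1 := by rw [h3] at hy2; linear_combination hy2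
    rw [show (12:ℕ) = 6*2 by rfl, pow_mul, hζ6]; norm_num
  · have h3 := quad_neg1 hy0 hn₂
    have hy6 : ((ζ^3*w)^2)^3 = 1 := by
      rw [← pow_mul, show 2*3 = 3*2 by rfl, pow_mul, h3]; norm_num
    rw [hy2] at hy6
    rw [show (-(ζ^6))^3 = -(ζ^18) by ring, hζ18] at hy6
    norm_num at hy6
  · have h3 := quad_zero hy0 hn₂
    apply hζ6ne
    rw [h3] at hy2; linear_combination hy2
  · have h3 := quad_one hy0 hn₂
    have hy6 : ((ζ^3*w)^2)^3 = 1 := by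
      rw [← pow_mul, show 2*3 = 3*2 by rfl, pow_mul, h3]; norm_num
    rw [hy2] at hy6
    -- (-(ζ^6))^3 = -(ζ^18) = -1 = 1 contradiction
    rw [show (-(ζ^6))^3 = -(ζ^18) by ring, hζ18] at hy6
    norm_num at hy6
  · have h3 := quad_two hy0 hn₂
    apply hζ12ne
    have hζ6 : ζ ^ 6 = -1 := by rw [h3] at hy2; linear_combination hy2
    rw [show (12:ℕ) = 6*2 by rfl, pow_mul, hζ6]; norm_num
set_option maxHeartbeats 1000000 in
theorem statement12 (Ht : Subgroup (↥(unitary ℂ) × G2)) (hfin : Finite ↥Ht)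
    (hneg : ∃ x ∈ Ht, (x.1 : ℂ) = -1 ∧ m2 x.2 = -1)
    (hzeta : ∃ x ∈ Ht, (x.1 : ℂ) = eQ (1/3) ∧ m2 x.2 = 1)
    (hproj : (fun p : ↥(unitary ℂ) × G2 => m2 p.2) '' (Ht : Set _) = twoT)
    (H : Subgroup G3)
    (hH : m3 '' (H : Set G3) = piMat '' (Ht : Set _))
    (hrrc : RRC H) :
    IsConjSub H (sgOf (BT 6)) ∨ IsConjSub H (sgOf (BT 12)) ∨
    IsConjSub H (sgOf (BT 18)) ∨
    ∃ χ : Matrix (Fin 2) (Fin 2) ℂ → ℂ,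
      (∀ A ∈ twoT, ∀ B ∈ twoT, χ (A * B) = χ A * χ B) ∧
      (∀ A ∈ twoT, (χ A) ^ 3 = 1) ∧
      (∀ ζ : ℂ, ζ ^ 3 = 1 → ∃ A ∈ twoT, χ A = ζ) ∧
      IsConjSub H (sgOf (BT11 χ)) := by
  classical
  obtain ⟨pz, hpzmem, hpz1, hpz2⟩ := hzeta
  obtain ⟨pn, hpnmem, hpn1, hpn2⟩ := hneg
  set K : Subgroup ↥(unitary ℂ) := Subgroup.comap (MonoidHom.inl (↥(unitary ℂ)) G2) Ht
    with hKdef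
  have hKmem : ∀ u : ↥(unitary ℂ), u ∈ K ↔ (u, (1:G2)) ∈ Ht := fun u => Iff.rfl
  have hKfin : Finite ↥K := by
    have hinj : Function.Injective
        (fun u : ↥K => (⟨((u : ↥(unitary ℂ)), (1:G2)), u.2⟩ : ↥Ht)) := by
      intro a b hab
      have := congrArg (fun x : ↥Ht => (x : (↥(unitary ℂ) × G2)).1) hab
      exact Subtype.ext this
    exact Finite.of_injective _ hinj
  set m := Nat.card ↥K with hmdef
  have hm0 : m ≠ 0 := K_card_ne_zero K
  -- e(1/3) ∈ K
  have hpz2' : pz.2 = 1 := m2_inj (by rw [hpz2, m2_one])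
  have hzK : pz.1 ∈ K := by
    rw [hKmem]
    have hpzeq : pz = (pz.1, (1:G2)) := Prod.ext rfl hpz2'
    rwa [← hpzeq]
  -- -1 ∈ K
  have hQn : m2 pn.2 ∈ Qset := by
    have : m2 pn.2 = qmat (-1) 0 0 0 := by rw [hpn2, qmat_neg_one]
    rw [this]; simp [Qset]
  have hnK : pn.1 ∈ K := (hKmem _).mpr (fst_mem_of_Qset hproj hpnmem hQn)
  -- injections for order transfer
  have hf : Function.Injective
      ((Submonoid.subtype (unitary ℂ)).comp (Subgroup.subtype K)) :=
    Subtype.val_injective.comp Subtype.val_injective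
  -- 3 ∣ m
  have h3m : (3 : ℕ) ∣ m := by
    have ho : orderOf ((pz.1 : ℂ)) = orderOf (⟨pz.1, hzK⟩ : ↥K) :=
      orderOf_injective ((Submonoid.subtype (unitary ℂ)).comp (Subgroup.subtype K)) hf (⟨pz.1, hzK⟩ : ↥K)
    have h3 : orderOf ((pz.1 : ℂ)) = 3 := by
      rw [hpz1]
      exact orderOf_eq_prime eQ_third_pow eQ_third_ne_one
    rw [ho] at h3
    rw [← h3]
    exact orderOf_dvd_natCard _
  -- 2 ∣ m
  have h2m : (2 : ℕ) ∣ m := by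
    have ho : orderOf ((pn.1 : ℂ)) = orderOf (⟨pn.1, hnK⟩ : ↥K) :=
      orderOf_injective ((Submonoid.subtype (unitary ℂ)).comp (Subgroup.subtype K)) hf (⟨pn.1, hnK⟩ : ↥K)
    have h2 : orderOf ((pn.1 : ℂ)) = 2 := by
      rw [hpn1]
      exact orderOf_eq_prime (by norm_num) (by norm_num)
    rw [ho] at h2
    rw [← h2]
    exact orderOf_dvd_natCard _
  have h6m : (6 : ℕ) ∣ m := by omega
  -- generator
  obtain ⟨σ, hσK, hσord, hσgen⟩ := K_gen K
  set ζ : ℂ := (σ : ℂ) with hζdef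
  -- RRC integers for elements of K
  have hKint : ∀ u : ↥(unitary ℂ), u ∈ K →
      ∃ k : ℤ, 2 * ((u:ℂ)^3 + ((u:ℂ)^3)⁻¹) = (k : ℂ) := by
    intro u hu
    obtain ⟨k, hk⟩ := trace_int hH hrrc ((hKmem u).mp hu)
    have htr : Matrix.trace (piMat (u, (1:G2))) = (u:ℂ)^2 + ((u:ℂ))⁻¹ * 2 := by
      show Matrix.trace (su3block ((u:ℂ)) (m2 1)) = _
      rw [m2_one, su3block_trace, one_diag_sum]
    rw [htr] at hk
    have h2 := rrc_one (u_conj u) (u_coe_ne_zero u) hk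
    exact ⟨k - 5, by rw [h2]; push_cast; ring⟩
  have hn3 : ∃ n : ℤ, (ζ^3 + (ζ^3)⁻¹) = (n : ℂ) := by
    obtain ⟨a, ha⟩ := hKint σ hσK
    obtain ⟨b, hb⟩ := hKint (σ^2) (pow_mem hσK 2)
    rw [u_coe_pow] at hb
    have hswap : ((ζ^2)^3 : ℂ) = (ζ^3)^2 := by ring
    rw [hswap] at hb
    exact int_sum_of_two (pow_ne_zero 3 (u_coe_ne_zero σ)) ha hb
  have hords : orderOf ζ = m :=
    (orderOf_injective (Submonoid.subtype (unitary ℂ)) Subtype.val_injective σ).trans hσord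
  have hmcases := order_constraint hm0 hords h6m hn3
  by_cases hall : ∀ p, p ∈ Ht → p.1 ∈ K
  · -- product case
    have hBT : piMat '' (Ht : Set _) = BT m := by
      ext M
      constructor
      · rintro ⟨p, hp, rfl⟩
        refine ⟨(p.1 : ℂ), ?_, m2 p.2, mem_twoT_of_mem hproj hp, rfl⟩
        rw [← u_coe_pow, K_pow_card K (hall p hp)]
        simp
      · rintro ⟨u, hum, A, hA2T, rfl⟩
        obtain ⟨v, hvK, hv⟩ := K_root_mem K hum
        obtain ⟨q, hq, hqA⟩ := exists_lift hproj hA2T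
        have hq1 : q.1 ∈ K := hall q hq
        have hmem1 : ((v * q.1⁻¹, (1:G2)) : ↥(unitary ℂ) × G2) ∈ Ht :=
          (hKmem _).mp (mul_mem hvK (inv_mem hq1))
        have hmul := mul_mem hmem1 hq
        have heq : ((v * q.1⁻¹, (1:G2)) : ↥(unitary ℂ) × G2) * q = (v, q.2) := by
          refine Prod.ext ?_ ?_
          · show v * q.1⁻¹ * q.1 = v
            group
          · show 1 * q.2 = q.2
            rw [one_mul]
        rw [heq] at hmul
        refine ⟨(v, q.2), hmul, ?_⟩
        show su3block ((v:ℂ)) (m2 q.2) = su3block u A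
        rw [hv, hqA]
    have hfin2 : sgOf (BT m) = H := sgOf_eq_self (hH.trans hBT)
    rcases hmcases with h | h | h <;> rw [h] at hfin2
    · exact Or.inl (by rw [hfin2]; exact isConjSub_refl H)
    · exact Or.inr (Or.inl (by rw [hfin2]; exact isConjSub_refl H))
    · exact Or.inr (Or.inr (Or.inl (by rw [hfin2]; exact isConjSub_refl H)))
  · -- mixed case
    push_neg at hall
    obtain ⟨p₀, hp₀, hp₀K⟩ := hall
    have hc0 : ((p₀.1 : ℂ)) ≠ 0 := u_coe_ne_zero _
    have hQno : m2 p₀.2 ∉ Qset := fun hq =>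
      hp₀K ((hKmem _).mpr (fst_mem_of_Qset hproj hp₀ hq))
    have hw0K : p₀.1 ^ 3 ∈ K := (hKmem _).mpr (cube_fst_mem hproj hp₀)
    have he := twoT_diag_sum (mem_twoT_of_mem hproj hp₀) hQno
    have hmix : ∀ v : ↥(unitary ℂ), v ∈ K → ∃ n : ℤ,
        ((v:ℂ) * (p₀.1:ℂ)) ^ 3 + (((v:ℂ) * (p₀.1:ℂ)) ^ 3)⁻¹ = (n : ℂ) := by
      intro v hv
      have hvmem : ((v, (1:G2)) : ↥(unitary ℂ) × G2) * p₀ ∈ Ht :=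
        mul_mem ((hKmem v).mp hv) hp₀
      have hprod : ((v, (1:G2)) : ↥(unitary ℂ) × G2) * p₀ = (v * p₀.1, p₀.2) :=
        Prod.ext rfl (one_mul _)
      rw [hprod] at hvmem
      obtain ⟨k, hk⟩ := trace_int hH hrrc hvmem
      have htr : Matrix.trace (piMat (v * p₀.1, p₀.2)) =
          ((v * p₀.1 : ↥(unitary ℂ)) : ℂ) ^ 2 +
            ((v * p₀.1 : ↥(unitary ℂ)) : ℂ)⁻¹ * (m2 p₀.2 0 0 + m2 p₀.2 1 1) :=
        su3block_trace _ _
      rw [htr] at hk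
      have h2 := rrc_pm he (u_conj _) (u_coe_ne_zero _) hk
      have hco : ((v * p₀.1 : ↥(unitary ℂ)) : ℂ) = (v:ℂ) * (p₀.1:ℂ) := rfl
      rw [hco] at h2
      rcases he with he1 | he1
      · exact ⟨k - 2, by rw [h2, he1]; push_cast; ring⟩
      · exact ⟨2 - k, by rw [h2, he1]; push_cast; ring⟩
    have h1mix : ∃ n : ℤ, ((p₀.1:ℂ))^3 + (((p₀.1:ℂ))^3)⁻¹ = (n : ℂ) := by
      obtain ⟨n, hn⟩ := hmix 1 (one_mem K)
      exact ⟨n, by simpa using hn⟩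
    have h2mix : ∃ n : ℤ, ζ^3 * ((p₀.1:ℂ))^3 + (ζ^3 * ((p₀.1:ℂ))^3)⁻¹ = (n : ℂ) := by
      obtain ⟨n, hn⟩ := hmix σ hσK
      exact ⟨n, by rw [← mul_pow]; exact hn⟩
    have hc3m : (((p₀.1:ℂ))^3) ^ m = 1 := by
      have h := K_pow_card K hw0K
      rw [← hmdef] at h
      have h2 := congrArg (fun u : ↥(unitary ℂ) => (u : ℂ)) h
      simpa only [u_coe_pow, OneMemClass.coe_one] using h2
    have hcmne : ¬ ((p₀.1:ℂ)) ^ m = 1 := by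
      intro h
      exact hp₀K (K_mem_of_coe K (by rw [← hmdef]; exact h))
    rcases hmcases with hm6 | hm12 | hm18
    · -- m = 6 : the graph case
      rw [hm6] at hc3m hcmne
      -- basic ω facts
      have hc18 : ((p₀.1:ℂ)) ^ 18 = 1 := by
        rw [← pow_mul] at hc3m; norm_num at hc3m; exact hc3m
      have hω3 : (((p₀.1:ℂ)) ^ 6) ^ 3 = 1 := by
        rw [← pow_mul]; norm_num; exact hc18
      have hωne : ((p₀.1:ℂ)) ^ 6 ≠ 1 := hcmne
      -- coe-sixth-power lemma for members of K
      have hK6 : ∀ x : ↥(unitary ℂ), x ∈ K → ((x:ℂ)) ^ 6 = 1 := by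
        intro x hx
        have h := K_pow_card K hx
        rw [← hmdef, hm6] at h
        have h2 := congrArg (fun u : ↥(unitary ℂ) => (u : ℂ)) h
        simpa only [u_coe_pow, OneMemClass.coe_one] using h2
      -- 18th power lemma for all p ∈ Ht
      have h18 : ∀ p, p ∈ Ht → ((p.1 : ℂ)) ^ 18 = 1 := by
        intro p hp
        have h3K : p.1 ^ 3 ∈ K := (hKmem _).mpr (cube_fst_mem hproj hp)
        have h := hK6 _ h3K
        rw [u_coe_pow, ← pow_mul] at h
        norm_num at h
        exact h
      -- χ
      set χ : Matrix (Fin 2) (Fin 2) ℂ → ℂ := fun A =>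
        if h : ∃ p, p ∈ Ht ∧ m2 p.2 = A then ((Classical.choose h).1 : ℂ) ^ 6 else 1
        with hχdef
      have hchi : ∀ p, p ∈ Ht → χ (m2 p.2) = ((p.1 : ℂ)) ^ 6 := by
        intro p hp
        have hex : ∃ q, q ∈ Ht ∧ m2 q.2 = m2 p.2 := ⟨p, hp, rfl⟩
        have hunfold : χ (m2 p.2) = ((Classical.choose hex).1 : ℂ) ^ 6 := by
          simp only [hχdef]
          rw [dif_pos hex]
        obtain ⟨hqmem, hqm2⟩ := Classical.choose_spec hex
        rw [hunfold]
        have hq2 : (Classical.choose hex).2 = p.2 := m2_inj hqm2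
        have hmem2 : Classical.choose hex * p⁻¹ ∈ Ht := mul_mem hqmem (inv_mem hp)
        have heqq : Classical.choose hex * p⁻¹ =
            ((Classical.choose hex).1 * p.1⁻¹, (1:G2)) := by
          refine Prod.ext rfl ?_
          show (Classical.choose hex).2 * p.2⁻¹ = 1
          rw [hq2]; group
        rw [heqq] at hmem2
        have h6 := hK6 _ ((hKmem _).mp hmem2)
        have hco : (((Classical.choose hex).1 * p.1⁻¹ : ↥(unitary ℂ)) : ℂ) =
            ((Classical.choose hex).1 : ℂ) * ((p.1 : ℂ))⁻¹ := by
          show (((Classical.choose hex).1 : ℂ) * ((p.1⁻¹ : ↥(unitary ℂ)) : ℂ)) = _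
          rw [Unitary.coe_inv]
        rw [hco] at h6
        exact pow6_eq (u_coe_ne_zero _) h6
      have hmult : ∀ A ∈ twoT, ∀ B ∈ twoT, χ (A * B) = χ A * χ B := by
        intro A hA B hB
        obtain ⟨p, hp, hpA⟩ := exists_lift hproj hA
        obtain ⟨q, hq, hqB⟩ := exists_lift hproj hB
        have hpq : p * q ∈ Ht := mul_mem hp hq
        have h1 := hchi _ hpq
        have hm2pq : m2 ((p * q).2) = A * B := by
          show m2 (p.2 * q.2) = A * B
          rw [m2_mul, hpA, hqB]
        rw [hm2pq] at h1
        rw [h1, ← hpA, ← hqB, hchi p hp, hchi q hq]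
        have hco : (((p * q).1 : ↥(unitary ℂ)) : ℂ) = (p.1 : ℂ) * (q.1 : ℂ) := rfl
        rw [hco, mul_pow]
      have hcube3 : ∀ A ∈ twoT, (χ A) ^ 3 = 1 := by
        intro A hA
        obtain ⟨p, hp, hpA⟩ := exists_lift hproj hA
        rw [← hpA, hchi p hp, ← pow_mul]
        norm_num
        exact h18 p hp
      have hsurj : ∀ ξ : ℂ, ξ ^ 3 = 1 → ∃ A ∈ twoT, χ A = ξ := by
        intro ξ hξ
        by_cases hξ1 : ξ = 1
        · refine ⟨1, qmat_one ▸ mem_twoT_one, ?_⟩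
          have h1 := hchi 1 (one_mem Ht)
          simp only [Prod.snd_one, Prod.fst_one, m2_one] at h1
          rw [h1, hξ1]
          show ((1 : ↥(unitary ℂ)) : ℂ) ^ 6 = 1
          simp
        · by_cases hξω : ξ = ((p₀.1:ℂ)) ^ 6
          · exact ⟨m2 p₀.2, mem_twoT_of_mem hproj hp₀, by rw [hchi p₀ hp₀, hξω]⟩
          · have hA2 : p₀ * p₀ ∈ Ht := mul_mem hp₀ hp₀
            refine ⟨m2 ((p₀ * p₀).2), mem_twoT_of_mem hproj hA2, ?_⟩
            rw [hchi _ hA2]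
            have hco : (((p₀ * p₀).1 : ↥(unitary ℂ)) : ℂ) = (p₀.1:ℂ) * (p₀.1:ℂ) := rfl
            rw [hco]
            have h1q : ξ^2 + ξ + 1 = 0 := by
              have hfac : (ξ - 1) * (ξ^2 + ξ + 1) = 0 := by linear_combination hξ
              rcases mul_eq_zero.mp hfac with h | h
              · exact absurd (by linear_combination h) hξ1
              · exact h
            have h2q : (((p₀.1:ℂ))^6)^2 + ((p₀.1:ℂ))^6 + 1 = 0 := by
              have hfac : (((p₀.1:ℂ))^6 - 1) * ((((p₀.1:ℂ))^6)^2 + ((p₀.1:ℂ))^6 + 1) = 0 := by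
                linear_combination hω3
              rcases mul_eq_zero.mp hfac with h | h
              · exact absurd (by linear_combination h) hωne
              · exact h
            have h3q : (ξ - ((p₀.1:ℂ))^6) * (ξ - (((p₀.1:ℂ))^6)^2) = 0 := by
              linear_combination h1q + (((p₀.1:ℂ))^6 - ξ - 1) * h2q
            rcases mul_eq_zero.mp h3q with h | h
            · exact absurd (by linear_combination h) hξω
            · linear_combination -h
      -- the set identity
      have hBT11 : piMat '' (Ht : Set _) = BT11 χ := by
        ext M
        constructor
        · rintro ⟨p, hp, rfl⟩
          exact ⟨(p.1 : ℂ), h18 p hp, m2 p.2, mem_twoT_of_mem hproj hp,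
            (hchi p hp).symm, rfl⟩
        · rintro ⟨u, hu18, A, hA2T, hu6, rfl⟩
          obtain ⟨q, hq, hqA⟩ := exists_lift hproj hA2T
          have habsu : ‖u‖ = 1 := root_abs_one (by norm_num) hu18
          have humem : u ∈ unitary ℂ := by
            rw [Unitary.mem_iff, Complex.star_def]
            have h1 : (starRingEnd ℂ) u * u = 1 := by
              rw [mul_comm, Complex.mul_conj, Complex.normSq_eq_norm_sq, habsu]
              norm_num
            exact ⟨h1, by rwa [mul_comm] at h1⟩
          have hv6 : (((⟨u, humem⟩ : ↥(unitary ℂ)) * q.1⁻¹ : ↥(unitary ℂ)) : ℂ) ^ 6 = 1 := by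
            have hco : (((⟨u, humem⟩ : ↥(unitary ℂ)) * q.1⁻¹ : ↥(unitary ℂ)) : ℂ) =
                u * ((q.1 : ℂ))⁻¹ := by
              show u * ((q.1⁻¹ : ↥(unitary ℂ)) : ℂ) = _
              rw [Unitary.coe_inv]
            rw [hco, mul_pow, inv_pow, hu6, ← hqA, hchi q hq]
            exact mul_inv_cancel₀ (pow_ne_zero 6 (u_coe_ne_zero q.1))
          have hvK : (⟨u, humem⟩ : ↥(unitary ℂ)) * q.1⁻¹ ∈ K :=
            K_mem_of_coe K (by rw [← hmdef, hm6]; exact hv6)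
          have hmemv : (((⟨u, humem⟩ : ↥(unitary ℂ)) * q.1⁻¹, (1:G2)) :
              ↥(unitary ℂ) × G2) ∈ Ht := (hKmem _).mp hvK
          have hmul := mul_mem hmemv hq
          have heq2 : (((⟨u, humem⟩ : ↥(unitary ℂ)) * q.1⁻¹, (1:G2)) :
              ↥(unitary ℂ) × G2) * q = ((⟨u, humem⟩ : ↥(unitary ℂ)), q.2) := by
            refine Prod.ext ?_ (one_mul _)
            show (⟨u, humem⟩ : ↥(unitary ℂ)) * q.1⁻¹ * q.1 = _
            group
          rw [heq2] at hmul
          refine ⟨((⟨u, humem⟩ : ↥(unitary ℂ)), q.2), hmul, ?_⟩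
          show su3block u (m2 q.2) = su3block u A
          rw [hqA]
      refine Or.inr (Or.inr (Or.inr ⟨χ, hmult, hcube3, hsurj, ?_⟩))
      rw [sgOf_eq_self (hH.trans hBT11)]
      exact isConjSub_refl H
    · -- m = 12 : impossible
      exfalso
      rw [hm12] at hc3m hcmne
      refine kill12 (by rw [hords, hm12]) hc3m ?_ h1mix h2mix
      intro h
      apply hcmne
      rw [show (12:ℕ) = 3*4 by rfl, pow_mul]
      exact h
    · -- m = 18 : impossible
      exfalso
      rw [hm18] at hc3m hcmne
      refine kill18 (by rw [hords, hm18]) hc3m ?_ h1mix h2mix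
      intro h
      apply hcmne
      rw [show (18:ℕ) = 3*6 by rfl, pow_mul]
      exact h
end
end

section
/- For every positive integer n, the real number (1 + 2·cos(2π/n))² is an integer if and only if n ∈ {1, 2, 3, 4, 6}. -/
noncomputable section

open Real

lemma aux_no_int {x : ℝ} (m : ℤ) (h1 : (m:ℝ) < x) (h2 : x < m + 1) :
    ¬ ∃ k : ℤ, x = (k : ℝ) := by
  rintro ⟨k, rfl⟩
  have hk1 : m < k := by exact_mod_cast h1
  have hk2 : (k:ℝ) < ((m+1 : ℤ) : ℝ) := by push_cast; linarith
  have hk2' : k < m + 1 := by exact_mod_cast hk2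
  omega

lemma aux_pi_sq : 9.8696 < Real.pi^2 ∧ Real.pi^2 < 9.86961 := by
  have hπl := Real.pi_gt_d6
  have hπu := Real.pi_lt_d6
  constructor <;> nlinarith

lemma aux_pi_4 : 97.409 < Real.pi^4 ∧ Real.pi^4 < 97.40921 := by
  obtain ⟨h1, h2⟩ := aux_pi_sq
  have h4 : Real.pi^4 = (Real.pi^2)^2 := by ring
  rw [h4]
  constructor <;> nlinarith

lemma aux_mono {m n : ℕ} (hm : 2 ≤ m) (h : m ≤ n) :
    Real.cos (2 * Real.pi / m) ≤ Real.cos (2 * Real.pi / n) := by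
  have hpi := Real.pi_pos
  have hm0 : (0:ℝ) < m := by positivity
  have hn0 : (0:ℝ) < n := by
    have : (0:ℕ) < n := by omega
    exact_mod_cast this
  have hmn : (m:ℝ) ≤ n := by exact_mod_cast h
  apply Real.cos_le_cos_of_nonneg_of_le_pi
  · positivity
  · rw [div_le_iff₀ hm0]
    have hm2 : (2:ℝ) ≤ m := by exact_mod_cast hm
    nlinarith
  · gcongr

lemma aux_cos_pi_div_14 : 0.974689 < Real.cos (Real.pi / 14) := by
  obtain ⟨hs1, hs2⟩ := aux_pi_sq
  obtain ⟨h41, h42⟩ := aux_pi_4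
  have hπl := Real.pi_gt_d6
  have hπu := Real.pi_lt_d6
  have hx : |Real.pi / 14| ≤ 1 := by
    rw [abs_of_pos (by positivity)]; nlinarith
  have h := Real.cos_bound hx
  rw [abs_of_pos (show (0:ℝ) < Real.pi / 14 by positivity), abs_le] at h
  nlinarith [h.1]

lemma aux_cos_2pi_div_7 : 0.6201 < Real.cos (2 * Real.pi / 7) := by
  have h14 := aux_cos_pi_div_14
  have hle : Real.cos (Real.pi / 14) ≤ 1 := Real.cos_le_one _
  have h7 : Real.cos (Real.pi / 7) = 2 * Real.cos (Real.pi / 14) ^ 2 - 1 := by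
    rw [← Real.cos_two_mul]; ring_nf
  have h27 : Real.cos (2 * Real.pi / 7) = 2 * Real.cos (Real.pi / 7) ^ 2 - 1 := by
    rw [← Real.cos_two_mul]; ring_nf
  have h7' : 0.90003 < Real.cos (Real.pi / 7) := by
    rw [h7]; nlinarith [sq_nonneg (Real.cos (Real.pi / 14) - 0.974689)]
  have h7le : Real.cos (Real.pi / 7) ≤ 1 := Real.cos_le_one _
  rw [h27]; nlinarith [sq_nonneg (Real.cos (Real.pi / 7) - 0.90003)]

lemma aux_cos_2pi_div_9 : 0.7439 < Real.cos (2 * Real.pi / 9) := by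
  obtain ⟨hs1, hs2⟩ := aux_pi_sq
  obtain ⟨h41, h42⟩ := aux_pi_4
  have hπl := Real.pi_gt_d6
  have hπu := Real.pi_lt_d6
  have hx : |2 * Real.pi / 9| ≤ 1 := by
    rw [abs_of_pos (by positivity)]; nlinarith
  have h := Real.cos_bound hx
  rw [abs_of_pos (show (0:ℝ) < 2 * Real.pi / 9 by positivity), abs_le] at h
  nlinarith [h.1]

lemma aux_cos_2pi_div_11 : 0.8313 < Real.cos (2 * Real.pi / 11) := by
  obtain ⟨hs1, hs2⟩ := aux_pi_sq
  obtain ⟨h41, h42⟩ := aux_pi_4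
  have hπl := Real.pi_gt_d6
  have hπu := Real.pi_lt_d6
  have hx : |2 * Real.pi / 11| ≤ 1 := by
    rw [abs_of_pos (by positivity)]; nlinarith
  have h := Real.cos_bound hx
  rw [abs_of_pos (show (0:ℝ) < 2 * Real.pi / 11 by positivity), abs_le] at h
  nlinarith [h.1]

lemma aux_cos_2pi_div_15 : Real.cos (2 * Real.pi / 15) < 0.9139 := by
  obtain ⟨hs1, hs2⟩ := aux_pi_sq
  obtain ⟨h41, h42⟩ := aux_pi_4
  have hπl := Real.pi_gt_d6
  have hπu := Real.pi_lt_d6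
  have hx : |2 * Real.pi / 15| ≤ 1 := by
    rw [abs_of_pos (by positivity)]; nlinarith
  have h := Real.cos_bound hx
  rw [abs_of_pos (show (0:ℝ) < 2 * Real.pi / 15 by positivity), abs_le] at h
  nlinarith [h.2]

lemma aux_sqrt2_lb : 1.41421 < Real.sqrt 2 := by
  have h : Real.sqrt ((1.41421:ℝ)^2) < Real.sqrt 2 := by
    apply Real.sqrt_lt_sqrt (by positivity); norm_num
  rwa [Real.sqrt_sq (by norm_num)] at h

lemma aux_sqrt2_ub : Real.sqrt 2 < 1.41422 := by
  have h : Real.sqrt 2 < Real.sqrt ((1.41422:ℝ)^2) := by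
    apply Real.sqrt_lt_sqrt (by norm_num); norm_num
  rwa [Real.sqrt_sq (by norm_num)] at h

lemma aux_sqrt5_lb : 2.23606 < Real.sqrt 5 := by
  have h : Real.sqrt ((2.23606:ℝ)^2) < Real.sqrt 5 := by
    apply Real.sqrt_lt_sqrt (by positivity); norm_num
  rwa [Real.sqrt_sq (by norm_num)] at h

lemma aux_sqrt5_ub : Real.sqrt 5 < 2.23607 := by
  have h : Real.sqrt 5 < Real.sqrt ((2.23607:ℝ)^2) := by
    apply Real.sqrt_lt_sqrt (by norm_num); norm_num
  rwa [Real.sqrt_sq (by norm_num)] at h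

-- exact values
lemma aux_cos_2pi_div_5 : Real.cos (2 * Real.pi / 5) = (Real.sqrt 5 - 1) / 4 := by
  have h := Real.cos_two_mul (Real.pi / 5)
  rw [Real.cos_pi_div_five] at h
  have h2 : 2 * (Real.pi / 5) = 2 * Real.pi / 5 := by ring
  rw [h2] at h
  rw [h]
  have h5 : Real.sqrt 5 ^ 2 = 5 := Real.sq_sqrt (by norm_num)
  nlinarith [h5]

lemma aux_cos_2pi_div_8 : Real.cos (2 * Real.pi / 8) = Real.sqrt 2 / 2 := by
  have h : 2 * Real.pi / 8 = Real.pi / 4 := by ring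
  rw [h, Real.cos_pi_div_four]

lemma aux_cos_2pi_div_10 : Real.cos (2 * Real.pi / 10) = (1 + Real.sqrt 5) / 4 := by
  have h : 2 * Real.pi / 10 = Real.pi / 5 := by ring
  rw [h, Real.cos_pi_div_five]

lemma aux_cos_2pi_div_16 : 0.92387 < Real.cos (2 * Real.pi / 16) := by
  have h : 2 * Real.pi / 16 = Real.pi / 8 := by ring
  rw [h, Real.cos_pi_div_eight]
  have h2 := aux_sqrt2_lb
  have hs : (1.84775:ℝ) < Real.sqrt (2 + Real.sqrt 2) := by
    have h' : Real.sqrt ((1.84775:ℝ)^2) < Real.sqrt (2 + Real.sqrt 2) := by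
      apply Real.sqrt_lt_sqrt (by positivity); nlinarith
    rwa [Real.sqrt_sq (by norm_num)] at h'
  linarith

lemma aux_mid (m : ℕ) (h1 : 11 ≤ m) (h2 : m ≤ 15) :
    ¬ ∃ k : ℤ, (1 + 2 * Real.cos (2 * Real.pi / m)) ^ 2 = (k : ℝ) := by
  have hl := aux_mono (m := 11) (n := m) (by norm_num) h1
  have hr := aux_mono (m := m) (n := 15) (by omega) h2
  push_cast at hl hr
  have hl' : (0.8313:ℝ) < Real.cos (2 * Real.pi / m) :=
    lt_of_lt_of_le aux_cos_2pi_div_11 hl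
  have hr' : Real.cos (2 * Real.pi / m) < 0.9139 :=
    lt_of_le_of_lt hr aux_cos_2pi_div_15
  refine aux_no_int 7 ?_ ?_ <;> push_cast <;>
    nlinarith [hl', hr', sq_nonneg (Real.cos (2 * Real.pi / m) - 0.8313)]

theorem statement14 (n : ℕ) (hn : 0 < n) :
    (∃ k : ℤ, (1 + 2 * Real.cos (2 * Real.pi / n)) ^ 2 = (k : ℝ)) ↔
    n ∈ ({1, 2, 3, 4, 6} : Set ℕ) := by
  constructor
  · rintro ⟨k, hk⟩
    by_contra hmem
    simp only [Set.mem_insert_iff, Set.mem_singleton_iff, not_or] at hmem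
    obtain ⟨h1, h2, h3, h4, h6⟩ := hmem
    rcases lt_or_ge n 16 with h16 | h16
    · interval_cases n
      · exact h1 rfl
      · exact h2 rfl
      · exact h3 rfl
      · exact h4 rfl
      · -- n = 5
        push_cast at hk
        refine aux_no_int 2 ?_ ?_ ⟨k, hk⟩ <;> push_cast <;>
          rw [aux_cos_2pi_div_5] <;>
          nlinarith [aux_sqrt5_lb, aux_sqrt5_ub]
      · exact h6 rfl
      · -- n = 7
        push_cast at hk
        have hm := aux_mono (m := 7) (n := 8) (by norm_num) (by norm_num)
        push_cast at hm
        rw [aux_cos_2pi_div_8] at hm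
        refine aux_no_int 5 ?_ ?_ ⟨k, hk⟩ <;> push_cast <;>
          nlinarith [aux_cos_2pi_div_7, aux_sqrt2_ub]
      · -- n = 8
        push_cast at hk
        refine aux_no_int 5 ?_ ?_ ⟨k, hk⟩ <;> push_cast <;>
          rw [aux_cos_2pi_div_8] <;>
          nlinarith [aux_sqrt2_lb, aux_sqrt2_ub]
      · -- n = 9
        push_cast at hk
        have hm := aux_mono (m := 9) (n := 10) (by norm_num) (by norm_num)
        push_cast at hm
        rw [aux_cos_2pi_div_10] at hm
        refine aux_no_int 6 ?_ ?_ ⟨k, hk⟩ <;> push_cast <;>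
          nlinarith [aux_cos_2pi_div_9, aux_sqrt5_ub]
      · -- n = 10
        push_cast at hk
        refine aux_no_int 6 ?_ ?_ ⟨k, hk⟩ <;> push_cast <;>
          rw [aux_cos_2pi_div_10] <;>
          nlinarith [aux_sqrt5_lb, aux_sqrt5_ub]
      · exact aux_mid 11 (by norm_num) (by norm_num) ⟨k, hk⟩
      · exact aux_mid 12 (by norm_num) (by norm_num) ⟨k, hk⟩
      · exact aux_mid 13 (by norm_num) (by norm_num) ⟨k, hk⟩
      · exact aux_mid 14 (by norm_num) (by norm_num) ⟨k, hk⟩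
      · exact aux_mid 15 (by norm_num) (by norm_num) ⟨k, hk⟩
    · -- n ≥ 16
      have hm := aux_mono (m := 16) (n := n) (by norm_num) h16
      have h16' : (0.92387 : ℝ) < Real.cos (2 * Real.pi / n) := by
        have := aux_cos_2pi_div_16
        push_cast at hm
        linarith
      have hlt1 : Real.cos (2 * Real.pi / n) < 1 := by
        have hpi := Real.pi_pos
        have hn0 : (0:ℝ) < n := by exact_mod_cast hn
        have hn2 : (2:ℝ) ≤ n := by
          have : 2 ≤ n := by omega
          exact_mod_cast this
        have h := Real.cos_lt_cos_of_nonneg_of_le_pi (le_refl 0)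
          (show 2 * Real.pi / n ≤ Real.pi by rw [div_le_iff₀ hn0]; nlinarith)
          (show (0:ℝ) < 2 * Real.pi / n by positivity)
        rwa [Real.cos_zero] at h
      refine aux_no_int 8 ?_ ?_ ⟨k, hk⟩ <;> push_cast <;>
        nlinarith [h16', hlt1, sq_nonneg (Real.cos (2 * Real.pi / n) - 0.92387)]
  · intro hmem
    simp only [Set.mem_insert_iff, Set.mem_singleton_iff] at hmem
    have hpi := Real.pi_pos
    rcases hmem with rfl | rfl | rfl | rfl | rfl
    · refine ⟨9, ?_⟩
      have h : 2 * Real.pi / ((1:ℕ):ℝ) = 2 * Real.pi := by norm_num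
      rw [h, Real.cos_two_pi]; norm_num
    · refine ⟨1, ?_⟩
      have h : 2 * Real.pi / ((2:ℕ):ℝ) = Real.pi := by push_cast; ring
      rw [h, Real.cos_pi]; norm_num
    · refine ⟨0, ?_⟩
      have h : 2 * Real.pi / ((3:ℕ):ℝ) = Real.pi - Real.pi / 3 := by push_cast; ring
      rw [h, Real.cos_pi_sub, Real.cos_pi_div_three]; norm_num
    · refine ⟨1, ?_⟩
      have h : 2 * Real.pi / ((4:ℕ):ℝ) = Real.pi / 2 := by push_cast; ring
      rw [h, Real.cos_pi_div_two]; norm_num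
    · refine ⟨4, ?_⟩
      have h : 2 * Real.pi / ((6:ℕ):ℝ) = Real.pi / 3 := by push_cast; ring
      rw [h, Real.cos_pi_div_three]; norm_num
end
end

section
/- The centralizer of U(1)₃ in USp(6) equals ι(U(3)), and the normalizer of U(1)₃ in USp(6) equals the union ι(U(3)) ∪ J·ι(U(3)). Moreover, conjugation by J carries ι(A) to ι(conj(A)) for every A ∈ U(3). -/
noncomputable section

open Matrix

abbrev M6 := Matrix (Fin 3 ⊕ Fin 3) (Fin 3 ⊕ Fin 3) ℂ

/-- The matrix J = [[0, I₃], [−I₃, 0]]. -/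
def J6 : M6 := Matrix.fromBlocks 0 1 (-1) 0

/-- USp(6): the set of 6×6 complex matrices that are unitary and satisfy Aᵀ·J·A = J. -/
def USp6set : Set M6 :=
  {A | A ∈ Matrix.unitaryGroup (Fin 3 ⊕ Fin 3) ℂ ∧ Aᵀ * J6 * A = J6}

/-- ι(A) = diag(A, conj(A)). -/
def iotaM (A : Matrix (Fin 3) (Fin 3) ℂ) : M6 :=
  Matrix.fromBlocks A 0 0 (A.map (starRingEnd ℂ))

/-- ι(U(3)) : the image of the 3×3 unitary group under ι. -/
def iotaU3 : Set M6 :=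
  {M | ∃ A ∈ Matrix.unitaryGroup (Fin 3) ℂ, M = iotaM A}

/-- U(1)₃ = {diag(u·I₃, conj(u)·I₃) : |u| = 1}. -/
def U13 : Set M6 :=
  {M | ∃ u : ℂ, ‖u‖ = 1 ∧
    M = Matrix.fromBlocks (u • 1) 0 0 ((starRingEnd ℂ u) • 1)}

-- helpers
def xM (u : ℂ) : M6 := Matrix.fromBlocks (u • 1) 0 0 ((starRingEnd ℂ u) • 1)

lemma U13_eq : U13 = {M | ∃ u : ℂ, ‖u‖ = 1 ∧ M = xM u} := rfl

abbrev M3 := Matrix (Fin 3) (Fin 3) ℂ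

lemma mapcc_mapcc (A : M3) : (A.map (starRingEnd ℂ)).map (starRingEnd ℂ) = A := by
  ext i j; simp [Matrix.map_apply]

lemma conjTranspose_mapcc (A : M3) : (A.map (starRingEnd ℂ))ᴴ = Aᵀ := by
  ext i j; simp [Matrix.conjTranspose_apply, Matrix.map_apply]

lemma transpose_mapcc (A : M3) : (A.map (starRingEnd ℂ))ᵀ = Aᴴ := by
  ext i j; simp [Matrix.conjTranspose_apply, Matrix.map_apply]

lemma mapcc_conjTranspose (A : M3) : (Aᴴ).map (starRingEnd ℂ) = Aᵀ := by
  ext i j; simp [Matrix.conjTranspose_apply, Matrix.map_apply]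

lemma diag_comm (a d : M3) (u : ℂ) :
    Matrix.fromBlocks a 0 0 d * xM u = xM u * Matrix.fromBlocks a 0 0 d := by
  simp [xM, Matrix.fromBlocks_multiply, mul_smul_comm, smul_mul_assoc]

lemma xM_mul_xM (u w : ℂ) : xM u * xM w = xM (u * w) := by
  simp only [xM, Matrix.fromBlocks_multiply, mul_smul_comm, smul_mul_assoc, smul_smul,
    _root_.map_mul, mul_zero, zero_mul, add_zero, zero_add, mul_one]
  rw [mul_comm w u, mul_comm ((starRingEnd ℂ) w) ((starRingEnd ℂ) u)]
  simp

lemma xM_I_sq : xM Complex.I * xM Complex.I = -1 := by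
  rw [xM_mul_xM, Complex.I_mul_I]
  simp only [xM, _root_.map_neg, _root_.map_one, neg_smul, one_smul, Matrix.fromBlocks_neg]
  rw [← Matrix.fromBlocks_one, Matrix.fromBlocks_neg, neg_zero]

lemma xM_neg_I : xM (-Complex.I) = -(xM Complex.I) := by
  simp [xM, Matrix.fromBlocks_neg]

lemma commI_blocks {g : M6} (h : g * xM Complex.I = xM Complex.I * g) :
    g = Matrix.fromBlocks g.toBlocks₁₁ 0 0 g.toBlocks₂₂ := by
  set a := g.toBlocks₁₁; set b := g.toBlocks₁₂
  set c := g.toBlocks₂₁; set d := g.toBlocks₂₂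
  have hg : g = Matrix.fromBlocks a b c d := (Matrix.fromBlocks_toBlocks g).symm
  rw [hg, xM] at h
  simp only [Matrix.fromBlocks_multiply, mul_zero, zero_mul, add_zero, zero_add,
    mul_smul_comm, smul_mul_assoc, mul_one, one_mul, Complex.conj_I,
    Matrix.fromBlocks_inj] at h
  obtain ⟨-, h12, h21, -⟩ := h
  have hb : b = 0 := by
    have h2 : ((2 : ℂ) * Complex.I) • b = 0 := by
      have : (Complex.I - -Complex.I) • b = 0 := by
        rw [sub_smul, h12, sub_self]
      convert this using 2; ring
    rcases smul_eq_zero.mp h2 with h | h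
    · exact absurd h (by simp [Complex.I_ne_zero])
    · exact h
  have hc : c = 0 := by
    have h2 : ((2 : ℂ) * Complex.I) • c = 0 := by
      have : (Complex.I - -Complex.I) • c = 0 := by
        rw [sub_smul, h21, sub_self]
      convert this using 2; ring
    rcases smul_eq_zero.mp h2 with h | h
    · exact absurd h (by simp [Complex.I_ne_zero])
    · exact h
  rw [hg, hb, hc]

lemma USp_inv {g : M6} (hg : g ∈ USp6set) : g * g⁻¹ = 1 ∧ g⁻¹ * g = 1 := by
  have h1 : g * star g = 1 := Matrix.mem_unitaryGroup_iff.mp hg.1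
  have h2 : star g * g = 1 := Matrix.mem_unitaryGroup_iff'.mp hg.1
  have hei : g⁻¹ = star g := Matrix.inv_eq_right_inv h1
  rw [hei]; exact ⟨h1, h2⟩

lemma cent_mem_iota {g : M6} (hg : g ∈ USp6set)
    (hc : g * xM Complex.I = xM Complex.I * g) : g ∈ iotaU3 := by
  set a := g.toBlocks₁₁ with ha
  set d := g.toBlocks₂₂ with hd
  have hgb : g = Matrix.fromBlocks a 0 0 d := commI_blocks hc
  -- unitarity of a
  have hu : g * star g = 1 := Matrix.mem_unitaryGroup_iff.mp hg.1
  rw [hgb, Matrix.star_eq_conjTranspose, Matrix.fromBlocks_conjTranspose] at hu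
  simp only [Matrix.conjTranspose_zero] at hu
  rw [Matrix.fromBlocks_multiply, ← Matrix.fromBlocks_one] at hu
  simp only [mul_zero, zero_mul, add_zero, zero_add, Matrix.fromBlocks_inj] at hu
  obtain ⟨hu11, -, -, hu22⟩ := hu
  -- symplectic condition
  have hs : gᵀ * J6 * g = J6 := hg.2
  rw [hgb, Matrix.fromBlocks_transpose, J6] at hs
  simp only [Matrix.transpose_zero, Matrix.fromBlocks_multiply, mul_zero, zero_mul,
    add_zero, zero_add, mul_one, one_mul, mul_neg, neg_mul, Matrix.fromBlocks_inj] at hs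
  obtain ⟨-, hs12, -, -⟩ := hs
  -- d = conj a
  have hca : (a.map (starRingEnd ℂ)) * aᵀ = 1 := by
    have := congrArg (fun M => M.map (starRingEnd ℂ)) hu11
    simpa [Matrix.map_mul, mapcc_conjTranspose, Matrix.map_one] using this
  have hda : d = a.map (starRingEnd ℂ) := by
    calc d = ((a.map (starRingEnd ℂ)) * aᵀ) * d := by rw [hca, one_mul]
    _ = (a.map (starRingEnd ℂ)) * (aᵀ * d) := by rw [mul_assoc]
    _ = a.map (starRingEnd ℂ) := by rw [hs12, mul_one]
  refine ⟨a, Matrix.mem_unitaryGroup_iff.mpr ?_, ?_⟩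
  · rw [Matrix.star_eq_conjTranspose]; exact hu11
  · rw [hgb, hda]; rfl

lemma iota_mem_USp {A : M3} (hA : A ∈ Matrix.unitaryGroup (Fin 3) ℂ) :
    iotaM A ∈ USp6set := by
  have h1 : A * Aᴴ = 1 := Matrix.mem_unitaryGroup_iff.mp hA
  have h2 : Aᴴ * A = 1 := Matrix.mem_unitaryGroup_iff'.mp hA
  have h3 : (A.map (starRingEnd ℂ)) * Aᵀ = 1 := by
    have := congrArg (fun M => M.map (starRingEnd ℂ)) h1
    simpa [Matrix.map_mul, mapcc_conjTranspose, Matrix.map_one] using this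
  have h4 : Aᵀ * (A.map (starRingEnd ℂ)) = 1 := by
    have := congrArg (fun M => M.map (starRingEnd ℂ)) h2
    simpa [Matrix.map_mul, mapcc_conjTranspose, Matrix.map_one] using this
  constructor
  · rw [Matrix.mem_unitaryGroup_iff, Matrix.star_eq_conjTranspose, iotaM,
      Matrix.fromBlocks_conjTranspose]
    simp only [Matrix.conjTranspose_zero, conjTranspose_mapcc]
    rw [Matrix.fromBlocks_multiply, ← Matrix.fromBlocks_one]
    simp [h1, h3]
  · rw [iotaM, Matrix.fromBlocks_transpose, J6]
    simp only [Matrix.transpose_zero, Matrix.fromBlocks_multiply, mul_zero, zero_mul,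
      add_zero, zero_add, mul_one, one_mul, mul_neg, neg_mul, transpose_mapcc]
    rw [h4, h2]
    simp

lemma J6_mul_J6 : J6 * J6 = -1 := by
  rw [J6, Matrix.fromBlocks_multiply, ← Matrix.fromBlocks_one, Matrix.fromBlocks_neg]
  simp

lemma J6_inv : J6⁻¹ = -J6 := by
  apply Matrix.inv_eq_right_inv
  rw [mul_neg, J6_mul_J6, neg_neg]

lemma J6_transpose : J6ᵀ = -J6 := by
  rw [J6, Matrix.fromBlocks_transpose, Matrix.fromBlocks_neg]
  simp

lemma J6_conjTranspose : J6ᴴ = -J6 := by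
  rw [J6, Matrix.fromBlocks_conjTranspose, Matrix.fromBlocks_neg]
  simp

lemma J6_mem : J6 ∈ USp6set := by
  constructor
  · rw [Matrix.mem_unitaryGroup_iff, Matrix.star_eq_conjTranspose, J6_conjTranspose,
      mul_neg, J6_mul_J6, neg_neg]
  · rw [J6_transpose, neg_mul, J6_mul_J6, neg_neg, one_mul]

lemma neg_mem_USp {g : M6} (hg : g ∈ USp6set) : -g ∈ USp6set := by
  obtain ⟨h1, h2⟩ := hg
  constructor
  · rw [Matrix.mem_unitaryGroup_iff] at h1 ⊢
    rwa [star_neg, neg_mul_neg]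
  · rwa [Matrix.transpose_neg, neg_mul, neg_mul, mul_neg, neg_neg]

lemma mul_mem_USp {g h : M6} (hg : g ∈ USp6set) (hh : h ∈ USp6set) : g * h ∈ USp6set := by
  obtain ⟨hg1, hg2⟩ := hg
  obtain ⟨hh1, hh2⟩ := hh
  refine ⟨mul_mem hg1 hh1, ?_⟩
  rw [Matrix.transpose_mul]
  calc hᵀ * gᵀ * J6 * (g * h) = hᵀ * (gᵀ * J6 * g) * h := by
        simp only [mul_assoc]
  _ = J6 := by rw [hg2, hh2]

lemma J6_mul_xM (u : ℂ) : J6 * xM u = xM ((starRingEnd ℂ) u) * J6 := by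
  simp only [J6, xM, Matrix.fromBlocks_multiply, mul_zero, zero_mul, add_zero, zero_add,
    mul_smul_comm, smul_mul_assoc, mul_one, one_mul, Complex.conj_conj]
  simp

lemma iota_comm (A : M3) (u : ℂ) : iotaM A * xM u = xM u * iotaM A :=
  diag_comm A (A.map (starRingEnd ℂ)) u

lemma J6_iota_conj (A : M3) : J6 * iotaM A * J6⁻¹ = iotaM (A.map (starRingEnd ℂ)) := by
  rw [J6_inv, iotaM, iotaM, J6, mapcc_mapcc]
  rw [Matrix.fromBlocks_multiply]
  have : -(Matrix.fromBlocks 0 1 (-1) 0 : M6) = Matrix.fromBlocks 0 (-1) 1 0 := by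
    rw [Matrix.fromBlocks_neg]
    simp
  rw [this, Matrix.fromBlocks_multiply]
  simp

lemma semiconj_norm {g : M6} (hg : g ∈ USp6set) (σ : ℂ → ℂ)
    (hσa : ∀ u, ‖u‖ = 1 → ‖σ u‖ = 1)
    (hσσ : ∀ u, σ (σ u) = u)
    (hcomm : ∀ u, g * xM u = xM (σ u) * g) :
    {y | ∃ x ∈ U13, y = g * x * g⁻¹} = U13 := by
  have hgi := (USp_inv hg).1
  ext y
  simp only [Set.mem_setOf_eq]
  constructor
  · rintro ⟨x, ⟨u, hu, rfl⟩, rfl⟩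
    refine ⟨σ u, hσa u hu, ?_⟩
    show g * xM u * g⁻¹ = xM (σ u)
    rw [hcomm u, mul_assoc, hgi, mul_one]
  · rintro ⟨u, hu, rfl⟩
    refine ⟨xM (σ u), ⟨σ u, hσa u hu, rfl⟩, ?_⟩
    show xM u = g * xM (σ u) * g⁻¹
    rw [hcomm (σ u), hσσ u, mul_assoc, hgi, mul_one]

theorem statement15 :
    {g ∈ USp6set | ∀ x ∈ U13, g * x = x * g} = iotaU3 ∧
    {g ∈ USp6set | {y | ∃ x ∈ U13, y = g * x * g⁻¹} = U13} =
      iotaU3 ∪ (fun M => J6 * M) '' iotaU3 ∧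
    ∀ A ∈ Matrix.unitaryGroup (Fin 3) ℂ,
      J6 * iotaM A * J6⁻¹ = iotaM (A.map (starRingEnd ℂ)) := by
  have part1 : {g ∈ USp6set | ∀ x ∈ U13, g * x = x * g} = iotaU3 := by
    ext g
    simp only [Set.mem_setOf_eq]
    constructor
    · rintro ⟨hg, hc⟩
      exact cent_mem_iota hg (hc (xM Complex.I) ⟨Complex.I, Complex.norm_I, rfl⟩)
    · rintro ⟨A, hA, rfl⟩
      refine ⟨iota_mem_USp hA, ?_⟩
      rintro x ⟨u, hu, rfl⟩
      exact iota_comm A u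
  refine ⟨part1, ?_, fun A _ => J6_iota_conj A⟩
  ext g
  simp only [Set.mem_setOf_eq, Set.mem_union, Set.mem_image]
  constructor
  · rintro ⟨hg, hset⟩
    have hgi := USp_inv hg
    have hmem : g * xM Complex.I * g⁻¹ ∈ U13 := by
      rw [← hset]; exact ⟨xM Complex.I, ⟨Complex.I, Complex.norm_I, rfl⟩, rfl⟩
    obtain ⟨v, hv, hveq0⟩ := hmem
    have hveq : g * xM Complex.I * g⁻¹ = xM v := hveq0
    have hsq : xM v * xM v = -1 := by
      rw [← hveq]
      have e1 : g * xM Complex.I * g⁻¹ * (g * xM Complex.I * g⁻¹)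
          = g * (xM Complex.I * (g⁻¹ * g * (xM Complex.I * g⁻¹))) := by
        simp only [mul_assoc]
      rw [e1, hgi.2, one_mul]
      have e2 : g * (xM Complex.I * (xM Complex.I * g⁻¹))
          = g * (xM Complex.I * xM Complex.I) * g⁻¹ := by
        simp only [mul_assoc]
      rw [e2, xM_I_sq, mul_neg_one, neg_mul, hgi.1]
    have hvv : v * v = -1 := by
      rw [xM_mul_xM] at hsq
      have := congrFun (congrFun hsq (Sum.inl 0)) (Sum.inl 0)
      simpa [xM, Matrix.fromBlocks_apply₁₁, Matrix.one_apply] using this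
    have hcases : v = Complex.I ∨ v = -Complex.I := by
      have h2 : (v - Complex.I) * (v + Complex.I) = 0 := by
        linear_combination hvv - Complex.I_mul_I
      rcases mul_eq_zero.mp h2 with h | h
      · left; exact sub_eq_zero.mp h
      · right; exact eq_neg_of_add_eq_zero_left h
    rcases hcases with rfl | rfl
    · left
      have hcomm : g * xM Complex.I = xM Complex.I * g := by
        have := congrArg (fun M => M * g) hveq
        simpa [mul_assoc, hgi.2] using this
      exact cent_mem_iota hg hcomm
    · right
      have hanti : g * xM Complex.I = -(xM Complex.I * g) := by
        have := congrArg (fun M => M * g) hveq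
        simpa [mul_assoc, hgi.2, xM_neg_I, neg_mul] using this
      have hUsp : -J6 * g ∈ USp6set := mul_mem_USp (neg_mem_USp J6_mem) hg
      have hJx : J6 * xM Complex.I = -(xM Complex.I * J6) := by
        rw [J6_mul_xM, Complex.conj_I, xM_neg_I, neg_mul]
      have hcomm : (-J6 * g) * xM Complex.I = xM Complex.I * (-J6 * g) := by
        calc -J6 * g * xM Complex.I = -(J6 * (g * xM Complex.I)) := by
              simp [mul_assoc]
          _ = -(J6 * (-(xM Complex.I * g))) := by rw [hanti]
          _ = J6 * (xM Complex.I * g) := by simp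
          _ = (J6 * xM Complex.I) * g := by rw [mul_assoc]
          _ = -(xM Complex.I * J6) * g := by rw [hJx]
          _ = xM Complex.I * (-J6 * g) := by simp [mul_assoc]
      have hio : -J6 * g ∈ iotaU3 := cent_mem_iota hUsp hcomm
      refine ⟨-J6 * g, hio, ?_⟩
      show J6 * (-J6 * g) = g
      rw [← mul_assoc, mul_neg, J6_mul_J6, neg_neg, one_mul]
  · rintro (⟨A, hA, rfl⟩ | ⟨m, ⟨A, hA, rfl⟩, rfl⟩)
    · exact ⟨iota_mem_USp hA, semiconj_norm (iota_mem_USp hA) id (fun u hu => hu)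
        (fun u => rfl) (fun u => iota_comm A u)⟩
    · refine ⟨mul_mem_USp J6_mem (iota_mem_USp hA), semiconj_norm
        (mul_mem_USp J6_mem (iota_mem_USp hA)) (starRingEnd ℂ)
        (fun u hu => by rwa [Complex.norm_conj]) (fun u => Complex.conj_conj u) ?_⟩
      intro u
      calc J6 * iotaM A * xM u = J6 * (xM u * iotaM A) := by rw [mul_assoc, iota_comm]
        _ = (J6 * xM u) * iotaM A := by rw [mul_assoc]
        _ = xM ((starRingEnd ℂ) u) * (J6 * iotaM A) := by rw [J6_mul_xM, mul_assoc]
end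
end
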